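/- arXiv:1205.1950 — 5 statements merged into one kernel-verified Lean document; each statement's English description precedes it below -/
import Mathlib

section
/- For every α ∈ [0,1) and all Borel probability measures P₁, P₂ on ℝ, the following are equivalent: (a) P₁ and P₂ are α-similar; (b) R_α(P₁) ∩ R_α(P₂) ≠ ∅; (c) d_TV(P₁,P₂) ≤ α. -/
open MeasureTheory ProbabilityTheory Filter Topology Asymptotics
open scoped ENNReal NNReal

noncomputable section

/-- The (cumulative) distribution function of a Borel measure on `ℝ`. -/
def distFun (P : Measure ℝ) (x : ℝ) : ℝ := (P (Set.Iic x)).toReal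

/-- The quantile function (left-continuous generalized inverse of the distribution
function) of a Borel measure on `ℝ`. -/
def quant (P : Measure ℝ) (t : ℝ) : ℝ := sInf {x : ℝ | t ≤ distFun P x}

/-- The quadratic Wasserstein distance between two probabilities on the line,
expressed as the `L²` distance between quantile functions. -/
def W2 (P Q : Measure ℝ) : ℝ :=
  Real.sqrt (∫ t in Set.Ioo (0 : ℝ) 1, (quant P t - quant Q t) ^ 2)

/-- `W₂` distance between two sets of probabilities. -/
def W2Set (A B : Set (Measure ℝ)) : ℝ :=
  sInf {d : ℝ | ∃ R₁ ∈ A, ∃ R₂ ∈ B, d = W2 R₁ R₂}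

/-- `W₂` distance between a set of probabilities and a fixed probability. -/
def W2SetPt (A : Set (Measure ℝ)) (Q : Measure ℝ) : ℝ :=
  sInf {d : ℝ | ∃ R ∈ A, d = W2 R Q}

/-- The total variation distance `sup_B |P(B) - Q(B)|` over Borel sets `B`. -/
def dTV (P Q : Measure ℝ) : ℝ :=
  sSup {d : ℝ | ∃ B : Set ℝ, MeasurableSet B ∧ d = |(P B).toReal - (Q B).toReal|}

/-- The set of `α`-trimmed versions of `P`: probabilities `Q ≪ P` with
`dQ/dP ≤ 1/(1-α)` `P`-a.s. -/
def trimmings (α : ℝ) (P : Measure ℝ) : Set (Measure ℝ) :=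
  {Q | IsProbabilityMeasure Q ∧ Q ≪ P ∧
    ∀ᵐ x ∂P, Q.rnDeriv P x ≤ ENNReal.ofReal (1 / (1 - α))}

/-- The mixture `(1-ε)•P₀ + ε•P'`. -/
def mix (ε : ℝ) (P₀ P' : Measure ℝ) : Measure ℝ :=
  ENNReal.ofReal (1 - ε) • P₀ + ENNReal.ofReal ε • P'

/-- `P₁` and `P₂` are `α`-similar: both are contaminations (of size at most `α`)
of a common probability `P₀`. -/
def AlphaSimilar (α : ℝ) (P₁ P₂ : Measure ℝ) : Prop :=
  ∃ P₀ P₁' P₂' : Measure ℝ, ∃ ε₁ ε₂ : ℝ,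
    IsProbabilityMeasure P₀ ∧ IsProbabilityMeasure P₁' ∧ IsProbabilityMeasure P₂' ∧
    0 ≤ ε₁ ∧ ε₁ ≤ α ∧ 0 ≤ ε₂ ∧ ε₂ ≤ α ∧
    P₁ = mix ε₁ P₀ P₁' ∧ P₂ = mix ε₂ P₀ P₂'

/-- Membership in `F₂`: finite second moment. -/
def FiniteSecondMoment (P : Measure ℝ) : Prop :=
  ∫⁻ x, ENNReal.ofReal (x ^ 2) ∂P < ⊤

/-- Empirical measure of the first `n` variables of a sequence. -/
def empSeq {Ω : Type*} (X : ℕ → Ω → ℝ) (n : ℕ) (ω : Ω) : Measure ℝ :=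
  (n : ℝ≥0∞)⁻¹ • ∑ i ∈ Finset.range n, Measure.dirac (X i ω)

/-- Convergence in probability to a constant. -/
def TendstoInProb {Ω : Type*} [MeasurableSpace Ω] (Pr : Measure Ω)
    (f : ℕ → Ω → ℝ) (c : ℝ) : Prop :=
  ∀ ε > 0, Tendsto (fun n => Pr {ω | ε ≤ |f n ω - c|}) atTop (𝓝 0)

/-- `P` has density `f` (w.r.t. Lebesgue measure) which is bounded away from zero on
its support and has a bounded derivative (on the interior of the support). -/
structure NiceDensity (P : Measure ℝ) (f : ℝ → ℝ) : Prop where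
  nonneg : ∀ x, 0 ≤ f x
  meas : Measurable f
  eq : P = volume.withDensity fun x => ENNReal.ofReal (f x)
  pos : ∃ c > 0, ∀ x ∈ Function.support f, c ≤ f x
  diff : DifferentiableOn ℝ f (interior (Function.support f))
  bddDeriv : ∃ M, ∀ x ∈ interior (Function.support f), |deriv f x| ≤ M

/-- Empirical measure of the coordinates of a vector indexed by a finset. -/
def empVec {N : ℕ} (v : Fin N → ℝ) (s : Finset (Fin N)) : Measure ℝ :=
  (s.card : ℝ≥0∞)⁻¹ • ∑ i ∈ s, Measure.dirac (v i)

/-- The bootstrap p-value: the probability, under `R^{⊗(n'+m')}`, that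
`√(n'm'/(n'+m')) W₂(P*_{n'}, Q*_{m'})` exceeds the threshold `c`, where `P*_{n'}` and
`Q*_{m'}` are the empirical measures of the first `n'` and last `m'` coordinates. -/
def bootPval (R : Measure ℝ) (n' m' : ℕ) (c : ℝ) : ℝ :=
  ((Measure.pi fun _ : Fin (n' + m') => R)
    {v | c < Real.sqrt ((n' * m' : ℝ) / (n' + m')) *
      W2 (empVec v (Finset.univ.filter fun i => (i : ℕ) < n'))
         (empVec v (Finset.univ.filter fun i => n' ≤ (i : ℕ)))}).toReal



lemma rnDeriv_le_of_le_smul {Q P : Measure ℝ} [IsFiniteMeasure Q] [IsFiniteMeasure P] {c : ℝ≥0∞}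
    (hc0 : c ≠ 0) (hc : c ≠ ∞) (h : Q ≤ c • P) : Q.rnDeriv P ≤ᵐ[P] fun _ => c := by
  have hfin : IsFiniteMeasure (c • P) := by
    constructor
    rw [Measure.smul_apply, smul_eq_mul]
    exact ENNReal.mul_lt_top hc.lt_top (measure_lt_top P _)
  have h1 : Q.rnDeriv (c • P) ≤ᵐ[c • P] 1 := Measure.rnDeriv_le_one_of_le h
  have h1' : Q.rnDeriv (c • P) ≤ᵐ[P] 1 :=
    (Measure.ae_ennreal_smul_measure_iff hc0).mp h1
  have h2 : Q.rnDeriv (c • P) =ᵐ[P] c⁻¹ • Q.rnDeriv P :=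
    Measure.rnDeriv_smul_right_of_ne_top Q P hc0 hc
  filter_upwards [h1', h2] with x hx1 hx2
  have : c⁻¹ * Q.rnDeriv P x ≤ 1 := by
    rw [hx2] at hx1
    simpa using hx1
  calc Q.rnDeriv P x = c * (c⁻¹ * Q.rnDeriv P x) := by
        rw [← mul_assoc, ENNReal.mul_inv_cancel hc0 hc, one_mul]
    _ ≤ c * 1 := mul_le_mul_right this c
    _ = c := mul_one c

lemma mem_trimmings_of_le_smul {α : ℝ} (hα0 : 0 ≤ α) (hα1 : α < 1) {Q P : Measure ℝ}
    (hQ : IsProbabilityMeasure Q) (hP : IsProbabilityMeasure P)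
    (h : Q ≤ ENNReal.ofReal (1 / (1 - α)) • P) : Q ∈ trimmings α P := by
  have hc0 : ENNReal.ofReal (1 / (1 - α)) ≠ 0 := by
    simp only [ne_eq, ENNReal.ofReal_eq_zero, not_le]
    have : (0:ℝ) < 1 - α := by linarith
    positivity
  refine ⟨hQ, Measure.absolutelyContinuous_of_le_smul h, ?_⟩
  exact rnDeriv_le_of_le_smul hc0 ENNReal.ofReal_ne_top h

lemma le_smul_of_mem_trimmings {α : ℝ} (hα1 : α < 1) {Q P : Measure ℝ}
    [IsProbabilityMeasure P] (hQ : Q ∈ trimmings α P) :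
    Q ≤ ENNReal.ofReal (1 / (1 - α)) • P := by
  obtain ⟨hQp, hQP, hbd⟩ := hQ
  have : IsProbabilityMeasure Q := hQp
  calc Q = P.withDensity (Q.rnDeriv P) := (Measure.withDensity_rnDeriv_eq _ _ hQP).symm
    _ ≤ P.withDensity (fun _ => ENNReal.ofReal (1 / (1 - α))) := withDensity_mono hbd
    _ = ENNReal.ofReal (1 / (1 - α)) • P := withDensity_const _

lemma ofReal_inv_eq {α : ℝ} (hα1 : α < 1) :
    (ENNReal.ofReal (1 - α))⁻¹ = ENNReal.ofReal (1 / (1 - α)) := by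
  rw [one_div, ← ENNReal.ofReal_inv_of_pos (by linarith)]

lemma smul_le_iff_le_smul {α : ℝ} (hα1 : α < 1) {Q P : Measure ℝ} :
    ENNReal.ofReal (1 - α) • Q ≤ P ↔ Q ≤ ENNReal.ofReal (1 / (1 - α)) • P := by
  have hc0 : ENNReal.ofReal (1 - α) ≠ 0 := by
    simp only [ne_eq, ENNReal.ofReal_eq_zero, not_le]; linarith
  have hct : ENNReal.ofReal (1 - α) ≠ ∞ := ENNReal.ofReal_ne_top
  rw [Measure.le_iff', Measure.le_iff']
  refine forall_congr' fun s => ?_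
  rw [Measure.smul_apply, Measure.smul_apply, smul_eq_mul, smul_eq_mul, ← ofReal_inv_eq hα1]
  exact ENNReal.mul_le_iff_le_inv hc0 hct

lemma prob_eq_of_le {P Q : Measure ℝ} [IsProbabilityMeasure P] [IsProbabilityMeasure Q]
    (h : Q ≤ P) : Q = P := by
  ext s hs
  have h1 : Q s ≤ P s := h s
  have h2 : Q sᶜ ≤ P sᶜ := h sᶜ
  have e1 : Q s + Q sᶜ = 1 := by rw [measure_add_measure_compl hs, measure_univ]
  have e2 : P s + P sᶜ = 1 := by rw [measure_add_measure_compl hs, measure_univ]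
  refine le_antisymm h1 ?_
  have : P s + P sᶜ ≤ Q s + P sᶜ := by
    rw [e2, ← e1]
    exact add_le_add_right h2 _
  exact (ENNReal.add_le_add_iff_right (measure_ne_top P sᶜ)).mp this

/-- For `α ∈ [0,1)` and Borel probability measures `P₁, P₂` on `ℝ`,
the following are equivalent: (a) `P₁` and `P₂` are `α`-similar;
(b) `R_α(P₁) ∩ R_α(P₂) ≠ ∅`; (c) `d_TV(P₁,P₂) ≤ α`. -/
theorem similar_iff_trimmings_inter_nonempty_iff_dTV_le
    (α : ℝ) (hα0 : 0 ≤ α) (hα1 : α < 1)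
    (P₁ P₂ : Measure ℝ) (h₁ : IsProbabilityMeasure P₁) (h₂ : IsProbabilityMeasure P₂) :
    (AlphaSimilar α P₁ P₂ ↔ (trimmings α P₁ ∩ trimmings α P₂).Nonempty) ∧
    ((trimmings α P₁ ∩ trimmings α P₂).Nonempty ↔ dTV P₁ P₂ ≤ α) := by
  have h1α : (0:ℝ) ≤ 1 - α := by linarith
  -- From membership in both trimmings, extract the scalar inequalities.
  have extract : ∀ Q ∈ trimmings α P₁ ∩ trimmings α P₂,
      IsProbabilityMeasure Q ∧ ENNReal.ofReal (1 - α) • Q ≤ P₁ ∧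
        ENNReal.ofReal (1 - α) • Q ≤ P₂ := by
    rintro Q ⟨hQ1, hQ2⟩
    exact ⟨hQ1.1, (smul_le_iff_le_smul hα1).mpr (le_smul_of_mem_trimmings hα1 hQ1),
      (smul_le_iff_le_smul hα1).mpr (le_smul_of_mem_trimmings hα1 hQ2)⟩
  constructor
  · constructor
    · rintro ⟨P₀, P₁', P₂', ε₁, ε₂, h₀, h₁', h₂', hε₁0, hε₁α, hε₂0, hε₂α, hm₁, hm₂⟩
      have key : ∀ (ε : ℝ), 0 ≤ ε → ε ≤ α → ∀ (P' P : Measure ℝ), P = mix ε P₀ P' →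
          ENNReal.ofReal (1 - α) • P₀ ≤ P := by
        intro ε hε0 hεα P' P hP
        rw [hP]
        calc ENNReal.ofReal (1 - α) • P₀ ≤ ENNReal.ofReal (1 - ε) • P₀ := by
              rw [Measure.le_iff']
              intro s
              simp only [Measure.smul_apply, smul_eq_mul]
              exact mul_le_mul_left (ENNReal.ofReal_le_ofReal (by linarith)) _
          _ ≤ mix ε P₀ P' := Measure.le_add_right le_rfl
      refine ⟨P₀, mem_trimmings_of_le_smul hα0 hα1 h₀ h₁ ?_,
        mem_trimmings_of_le_smul hα0 hα1 h₀ h₂ ?_⟩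
      · exact (smul_le_iff_le_smul hα1).mp (key ε₁ hε₁0 hε₁α P₁' P₁ hm₁)
      · exact (smul_le_iff_le_smul hα1).mp (key ε₂ hε₂0 hε₂α P₂' P₂ hm₂)
    · rintro ⟨Q, hQmem⟩
      obtain ⟨hQp, hle1, hle2⟩ := extract Q hQmem
      haveI := hQp
      rcases eq_or_lt_of_le hα0 with h0 | h0
      · -- α = 0
        have hα : α = 0 := h0.symm
        subst hα
        have e1 : Q = P₁ := prob_eq_of_le (by simpa using hle1)
        have e2 : Q = P₂ := prob_eq_of_le (by simpa using hle2)
        refine ⟨Q, Q, Q, 0, 0, hQp, hQp, hQp, le_rfl, le_rfl, le_rfl, le_rfl, ?_, ?_⟩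
        · rw [← e1]; simp [mix]
        · rw [← e2]; simp [mix]
      · -- α > 0
        set a := ENNReal.ofReal α with ha
        set c := ENNReal.ofReal (1 - α) with hc
        have ha0 : a ≠ 0 := by simp [ha, ENNReal.ofReal_eq_zero, not_le, h0]
        have hat : a ≠ ∞ := ENNReal.ofReal_ne_top
        have hone_sub : (1 : ℝ≥0∞) - c = a := by
          rw [hc, ha, ← ENNReal.ofReal_one, ← ENNReal.ofReal_sub _ h1α]
          norm_num
        haveI hfin1 : IsFiniteMeasure (c • Q) := by
          constructor
          rw [Measure.smul_apply, smul_eq_mul]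
          exact ENNReal.mul_lt_top ENNReal.ofReal_lt_top (measure_lt_top Q _)
        have hprob : ∀ P : Measure ℝ, IsProbabilityMeasure P → c • Q ≤ P →
            IsProbabilityMeasure (a⁻¹ • (P - c • Q)) ∧ P = mix α Q (a⁻¹ • (P - c • Q)) := by
          intro P hP hle
          haveI := hP
          have hsub : (P - c • Q) Set.univ = a := by
            rw [Measure.sub_apply MeasurableSet.univ hle, Measure.smul_apply, smul_eq_mul,
              measure_univ, measure_univ, mul_one, hone_sub]
          constructor
          · constructor
            rw [Measure.smul_apply, smul_eq_mul, hsub, ENNReal.inv_mul_cancel ha0 hat]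
          · rw [mix, ← hc, ← ha, smul_smul, ENNReal.mul_inv_cancel ha0 hat, one_smul,
              add_comm, Measure.sub_add_cancel_of_le hle]
        obtain ⟨hp1, hmix1⟩ := hprob P₁ h₁ hle1
        obtain ⟨hp2, hmix2⟩ := hprob P₂ h₂ hle2
        exact ⟨Q, a⁻¹ • (P₁ - c • Q), a⁻¹ • (P₂ - c • Q), α, α, hQp, hp1, hp2,
          hα0, le_rfl, hα0, le_rfl, hmix1, hmix2⟩
  · constructor
    · rintro ⟨Q, hQmem⟩
      obtain ⟨hQp, hle1, hle2⟩ := extract Q hQmem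
      haveI := hQp
      apply Real.sSup_le _ hα0
      rintro d ⟨B, hB, rfl⟩
      have fact : ∀ (P : Measure ℝ), IsProbabilityMeasure P → ENNReal.ofReal (1 - α) • Q ≤ P →
          ∀ s : Set ℝ, (1 - α) * (Q s).toReal ≤ (P s).toReal := by
        intro P hP hle s
        haveI := hP
        have := ENNReal.toReal_mono (measure_ne_top P s) (hle s)
        simpa [Measure.smul_apply, smul_eq_mul, ENNReal.toReal_mul,
          ENNReal.toReal_ofReal h1α] using this
      have f1 := fact P₁ h₁ hle1 B
      have f2 := fact P₁ h₁ hle1 Bᶜ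
      have f3 := fact P₂ h₂ hle2 B
      have f4 := fact P₂ h₂ hle2 Bᶜ
      have hsum : ∀ (P : Measure ℝ), IsProbabilityMeasure P →
          (P B).toReal + (P Bᶜ).toReal = 1 := by
        intro P hP
        haveI := hP
        rw [← ENNReal.toReal_add (measure_ne_top P B) (measure_ne_top P Bᶜ),
          measure_add_measure_compl hB, measure_univ, ENNReal.toReal_one]
      have s1 := hsum P₁ h₁
      have s2 := hsum P₂ h₂
      have sq := hsum Q hQp
      have hmul : (1 - α) * (Q B).toReal + (1 - α) * (Q Bᶜ).toReal = 1 - α := by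
        rw [← mul_add, sq, mul_one]
      rw [abs_le]
      constructor <;> linarith
    · intro hTV
      set μ := P₁ + P₂ with hμ
      have hac1 : P₁ ≪ μ := Measure.absolutelyContinuous_of_le (Measure.le_add_right le_rfl)
      have hac2 : P₂ ≪ μ := Measure.absolutelyContinuous_of_le (Measure.le_add_left le_rfl)
      set f₁ := P₁.rnDeriv μ with hf₁
      set f₂ := P₂.rnDeriv μ with hf₂
      have hwd1 : μ.withDensity f₁ = P₁ := Measure.withDensity_rnDeriv_eq _ _ hac1
      have hwd2 : μ.withDensity f₂ = P₂ := Measure.withDensity_rnDeriv_eq _ _ hac2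
      have hmeas1 : Measurable f₁ := Measure.measurable_rnDeriv _ _
      have hmeas2 : Measurable f₂ := Measure.measurable_rnDeriv _ _
      set g := fun x => min (f₁ x) (f₂ x) with hg
      have hmg : Measurable g := hmeas1.min hmeas2
      set ν := μ.withDensity g with hν
      set m := ν Set.univ with hm
      set B := {x : ℝ | f₂ x ≤ f₁ x} with hB
      have hBmeas : MeasurableSet B := measurableSet_le hmeas2 hmeas1
      have hνB : ν B = P₂ B := by
        rw [hν, withDensity_apply _ hBmeas, ← hwd2, withDensity_apply _ hBmeas]
        apply setLIntegral_congr_fun hBmeas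
        intro x hx
        exact min_eq_right hx
      have hνBc : ν Bᶜ = P₁ Bᶜ := by
        rw [hν, withDensity_apply _ hBmeas.compl, ← hwd1, withDensity_apply _ hBmeas.compl]
        apply setLIntegral_congr_fun hBmeas.compl
        intro x hx
        exact min_eq_left (le_of_lt (lt_of_not_ge hx))
      have hmsplit : m = P₂ B + P₁ Bᶜ := by
        rw [hm, ← measure_add_measure_compl hBmeas, hνB, hνBc]
      have hν_le1 : ν ≤ P₁ := by
        rw [hν, ← hwd1]
        exact withDensity_mono (Filter.Eventually.of_forall fun x => min_le_left _ _)
      have hν_le2 : ν ≤ P₂ := by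
        rw [hν, ← hwd2]
        exact withDensity_mono (Filter.Eventually.of_forall fun x => min_le_right _ _)
      have hm_ne_top : m ≠ ∞ := by
        rw [hmsplit]
        exact (ENNReal.add_lt_top.mpr ⟨measure_lt_top _ _, measure_lt_top _ _⟩).ne
      have habs : |(P₁ B).toReal - (P₂ B).toReal| ≤ α := by
        refine le_trans ?_ hTV
        apply le_csSup
        · refine ⟨1, ?_⟩
          rintro d ⟨C, hC, rfl⟩
          have b1 : (P₁ C).toReal ≤ 1 := by
            simpa using ENNReal.toReal_mono ENNReal.one_ne_top prob_le_one
          have b2 : (P₂ C).toReal ≤ 1 := by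
            simpa using ENNReal.toReal_mono ENNReal.one_ne_top prob_le_one
          have b3 : (0:ℝ) ≤ (P₁ C).toReal := ENNReal.toReal_nonneg
          have b4 : (0:ℝ) ≤ (P₂ C).toReal := ENNReal.toReal_nonneg
          rw [abs_le]
          constructor <;> linarith
        · exact ⟨B, hBmeas, rfl⟩
      have hs1 : (P₁ B).toReal + (P₁ Bᶜ).toReal = 1 := by
        rw [← ENNReal.toReal_add (measure_ne_top P₁ B) (measure_ne_top P₁ Bᶜ),
          measure_add_measure_compl hBmeas, measure_univ, ENNReal.toReal_one]
      have hmtr : m.toReal = (P₂ B).toReal + (P₁ Bᶜ).toReal := by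
        rw [hmsplit, ENNReal.toReal_add (measure_ne_top P₂ B) (measure_ne_top P₁ Bᶜ)]
      have hm_low : 1 - α ≤ m.toReal := by
        have := abs_le.mp habs
        rw [hmtr]
        linarith
      have hm_ne0 : m ≠ 0 := by
        intro h
        rw [h] at hm_low
        simp at hm_low
        linarith
      set Q := m⁻¹ • ν with hQdef
      have hQp : IsProbabilityMeasure Q := by
        constructor
        rw [hQdef, Measure.smul_apply, smul_eq_mul, ← hm, ENNReal.inv_mul_cancel hm_ne0 hm_ne_top]
      have hminv : m⁻¹ ≤ ENNReal.ofReal (1 / (1 - α)) := by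
        rw [← ofReal_inv_eq hα1]
        exact ENNReal.inv_le_inv' (ENNReal.ofReal_le_of_le_toReal hm_low)
      have hQle : ∀ P : Measure ℝ, ν ≤ P → Q ≤ ENNReal.ofReal (1 / (1 - α)) • P := by
        intro P hle
        rw [Measure.le_iff']
        intro s
        simp only [hQdef, Measure.smul_apply, smul_eq_mul]
        exact mul_le_mul' hminv (hle s)
      exact ⟨Q, mem_trimmings_of_le_smul hα0 hα1 hQp h₁ (hQle P₁ hν_le1),
        mem_trimmings_of_le_smul hα0 hα1 hQp h₂ (hQle P₂ hν_le2)⟩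

end
end

section
/- Let α ∈ [0,1) and let P, Q be Borel probability measures on ℝ. Then Q ∈ R_α(P) if and only if there exists a Borel probability measure P′ on ℝ such that P = (1−α)Q + αP′. -/
open MeasureTheory ProbabilityTheory Filter Topology Asymptotics
open scoped ENNReal NNReal

noncomputable section

/-- `Q ∈ R_α(P)` iff `P = (1-α)Q + αP'` for some probability `P'`,
i.e. `Q` is an `α`-trimming of `P` exactly when `P` lies in the contamination
neighbourhood `V_α(Q)`. -/
theorem mem_trimmings_iff_contamination
    (α : ℝ) (hα0 : 0 ≤ α) (hα1 : α < 1)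
    (P Q : Measure ℝ) (hP : IsProbabilityMeasure P) (hQ : IsProbabilityMeasure Q) :
    Q ∈ trimmings α P ↔
      ∃ P' : Measure ℝ, IsProbabilityMeasure P' ∧ P = mix α Q P' := by
  have hc0 : (0:ℝ) < 1 - α := by linarith
  set c : ℝ≥0∞ := ENNReal.ofReal (1 - α) with hc
  have hcne0 : c ≠ 0 := by
    simp only [hc, ne_eq, ENNReal.ofReal_eq_zero, not_le]; linarith
  have hcnetop : c ≠ ⊤ := ENNReal.ofReal_ne_top
  have hinv : ENNReal.ofReal (1 / (1 - α)) = c⁻¹ := by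
    rw [one_div, hc, ENNReal.ofReal_inv_of_pos hc0]
  constructor
  · rintro ⟨hQprob, hQP, hbd⟩
    have hf : Measurable (Q.rnDeriv P) := Measure.measurable_rnDeriv Q P
    have hbd' : ∀ᵐ x ∂P, c * Q.rnDeriv P x ≤ 1 := by
      filter_upwards [hbd] with x hx
      rw [hinv] at hx
      calc c * Q.rnDeriv P x ≤ c * c⁻¹ := by gcongr
        _ = 1 := ENNReal.mul_inv_cancel hcne0 hcnetop
    have hwd : P.withDensity (fun x => c * Q.rnDeriv P x) = c • Q := by
      have : (fun x => c * Q.rnDeriv P x) = c • Q.rnDeriv P := by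
        ext x; simp [smul_eq_mul]
      rw [this, withDensity_smul c hf, Measure.withDensity_rnDeriv_eq Q P hQP]
    have hmg : Measurable (fun x => c * Q.rnDeriv P x) := hf.const_mul c
    have hsplit : P.withDensity (fun x => 1 - c * Q.rnDeriv P x) + c • Q = P := by
      rw [← hwd, ← withDensity_add_right _ hmg]
      rw [withDensity_congr_ae (g := fun _ => (1:ℝ≥0∞))
        (by filter_upwards [hbd'] with x hx; exact tsub_add_cancel_of_le hx)]
      exact withDensity_one
    have hint : ∫⁻ x, c * Q.rnDeriv P x ∂P = c := by
      rw [lintegral_const_mul c hf, Measure.lintegral_rnDeriv hQP, measure_univ, mul_one]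
    have hmass : P.withDensity (fun x => 1 - c * Q.rnDeriv P x) Set.univ
        = ENNReal.ofReal α := by
      rw [withDensity_apply _ MeasurableSet.univ, Measure.restrict_univ,
        lintegral_sub hmg (by rw [hint]; exact hcnetop) hbd', lintegral_one, measure_univ,
        hint, hc]
      rw [show (1:ℝ≥0∞) = ENNReal.ofReal 1 by simp, ← ENNReal.ofReal_sub _ (by linarith)]
      norm_num
    rcases eq_or_lt_of_le hα0 with h0 | h0
    · -- α = 0
      have hz : P.withDensity (fun x => 1 - c * Q.rnDeriv P x) = 0 := by
        rw [← Measure.measure_univ_eq_zero, hmass, ← h0]; simp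
      rw [hz, zero_add] at hsplit
      have hcone : c = 1 := by rw [hc, ← h0]; simp
      refine ⟨Q, hQ, ?_⟩
      rw [mix, ← h0]
      simp only [sub_zero, ENNReal.ofReal_one, ENNReal.ofReal_zero, one_smul, zero_smul,
        add_zero]
      rw [← hsplit, hcone, one_smul]
    · -- α > 0
      set a : ℝ≥0∞ := ENNReal.ofReal α with ha
      have hane0 : a ≠ 0 := by simp only [ha, ne_eq, ENNReal.ofReal_eq_zero, not_le]; linarith
      have hanetop : a ≠ ⊤ := ENNReal.ofReal_ne_top
      refine ⟨a⁻¹ • P.withDensity (fun x => 1 - c * Q.rnDeriv P x), ⟨?_⟩, ?_⟩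
      · rw [Measure.smul_apply, hmass, smul_eq_mul, ENNReal.inv_mul_cancel hane0 hanetop]
      · rw [mix, ← hc, ← ha, smul_smul, ENNReal.mul_inv_cancel hane0 hanetop, one_smul,
          add_comm, hsplit]
  · rintro ⟨P', hP', hPeq⟩
    rw [mix, ← hc] at hPeq
    have hle : c • Q ≤ P := by rw [hPeq]; exact Measure.le_add_right le_rfl
    have hQP : Q ≪ P := by
      refine Measure.AbsolutelyContinuous.mk fun s hs h0 => ?_
      have h1 : (c • Q) s ≤ P s := Measure.le_iff'.mp hle s
      rw [h0, Measure.smul_apply, smul_eq_mul] at h1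
      simpa [hcne0] using le_antisymm h1 zero_le
    refine ⟨hQ, hQP, ?_⟩
    have h1 : (c • Q).rnDeriv P ≤ᵐ[P] 1 := Measure.rnDeriv_le_one_of_le hle
    have h2 : (c • Q).rnDeriv P =ᵐ[P] c • Q.rnDeriv P :=
      Measure.rnDeriv_smul_left_of_ne_top Q P hcnetop
    filter_upwards [h1, h2] with x hx1 hx2
    rw [hx2] at hx1
    simp only [Pi.smul_apply, smul_eq_mul, Pi.one_apply] at hx1
    rw [hinv, ENNReal.le_inv_iff_mul_le, mul_comm]
    exact hx1


end
end

section
/- Let α ∈ [0,1), let P, Q ∈ F₂ have quantile functions F⁻¹ and G⁻¹, and let h ∈ C_α. Then W₂²(P_h, Q_h) = ∫₀¹ (F⁻¹(h⁻¹(x)) − G⁻¹(h⁻¹(x)))² dx = ∫₀¹ (F⁻¹(y) − G⁻¹(y))² h′(y) dy. -/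
open MeasureTheory ProbabilityTheory Filter Topology Asymptotics
open scoped ENNReal NNReal

noncomputable section

/-- `P₁` and `P₂` are `α`-similar: both are contaminations (of size at most `α`)
of a common probability `P₀`. -/
def SimilarMeas (α : ℝ) (P₁ P₂ : Measure ℝ) : Prop :=
  ∃ P₀ P₁' P₂' : Measure ℝ, ∃ ε₁ ε₂ : ℝ,
    IsProbabilityMeasure P₀ ∧ IsProbabilityMeasure P₁' ∧ IsProbabilityMeasure P₂' ∧
    0 ≤ ε₁ ∧ ε₁ ≤ α ∧ 0 ≤ ε₂ ∧ ε₂ ≤ α ∧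
    P₁ = mix ε₁ P₀ P₁' ∧ P₂ = mix ε₂ P₀ P₂'

/-- `h` belongs to `C_α`, with (a.e.) derivative `h'`: `h` is absolutely continuous on
`[0,1]` (it is the integral of `h'`), `h 0 = 0`, `h 1 = 1` and `0 ≤ h' ≤ 1/(1-α)`
almost everywhere on `[0,1]`. -/
def IsTrimmingFun (α : ℝ) (h h' : ℝ → ℝ) : Prop :=
  Measurable h' ∧
  (∀ᵐ y ∂(volume.restrict (Set.Icc (0 : ℝ) 1)), 0 ≤ h' y ∧ h' y ≤ 1 / (1 - α)) ∧
  (∀ x ∈ Set.Icc (0 : ℝ) 1, h x = ∫ y in Set.Ioc (0 : ℝ) x, h' y) ∧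
  h 1 = 1

/-- Generalized inverse of a function on `[0,1]`. -/
def funInv (h : ℝ → ℝ) (t : ℝ) : ℝ := sInf {x | x ∈ Set.Icc (0 : ℝ) 1 ∧ t ≤ h x}

/-- Change of variables for the common trimming distance: if
`h ∈ C_α` with derivative `h'` and `P_h`, `Q_h` are the probabilities with distribution
functions `h ∘ F`, `h ∘ G`, then
`W₂²(P_h, Q_h) = ∫₀¹ (F⁻¹(h⁻¹(x)) - G⁻¹(h⁻¹(x)))² dx
              = ∫₀¹ (F⁻¹(y) - G⁻¹(y))² h'(y) dy`. -/
theorem W2_trimmed_change_of_variables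
    (α : ℝ) (hα0 : 0 ≤ α) (hα1 : α < 1)
    (P Q : Measure ℝ) (hP : IsProbabilityMeasure P) (hQ : IsProbabilityMeasure Q)
    (hmP : FiniteSecondMoment P) (hmQ : FiniteSecondMoment Q)
    (h h' : ℝ → ℝ) (hh : IsTrimmingFun α h h')
    (Ph Qh : Measure ℝ)
    (hPh : IsProbabilityMeasure Ph) (hQh : IsProbabilityMeasure Qh)
    (hPhcdf : ∀ x, distFun Ph x = h (distFun P x))
    (hQhcdf : ∀ x, distFun Qh x = h (distFun Q x)) :
    W2 Ph Qh ^ 2 =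
      ∫ x in Set.Ioo (0 : ℝ) 1, (quant P (funInv h x) - quant Q (funInv h x)) ^ 2 ∧
    W2 Ph Qh ^ 2 =
      ∫ y in Set.Ioo (0 : ℝ) 1, (quant P y - quant Q y) ^ 2 * h' y := by
  obtain ⟨h'meas, h'bdd, hint_eq, h1⟩ := hh
  have hIcc01 : (Set.Ioo (0:ℝ) 1) ⊆ Set.Icc 0 1 := Set.Ioo_subset_Icc_self
  -- integrability of h'
  have hIntIcc : IntegrableOn h' (Set.Icc 0 1) volume := by
    refine Integrable.mono' (integrable_const (1/(1-α))) h'meas.aestronglyMeasurable ?_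
    filter_upwards [h'bdd] with y hy
    rw [Real.norm_eq_abs, abs_of_nonneg hy.1]; exact hy.2
  have hIntIoc : ∀ a b : ℝ, 0 ≤ a → b ≤ 1 → IntegrableOn h' (Set.Ioc a b) volume :=
    fun a b ha hb => hIntIcc.mono_set fun x hx => ⟨ha.trans hx.1.le, hx.2.trans hb⟩
  have h'nn : ∀ a b : ℝ, 0 ≤ a → b ≤ 1 →
      (0 : ℝ → ℝ) ≤ᵐ[volume.restrict (Set.Ioc a b)] h' := by
    intro a b ha hb
    have hsub : Set.Ioc a b ⊆ Set.Icc (0:ℝ) 1 :=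
      fun x hx => ⟨ha.trans hx.1.le, hx.2.trans hb⟩
    have := ae_restrict_of_ae_restrict_of_subset hsub h'bdd
    filter_upwards [this] with y hy using hy.1
  have h0 : h 0 = 0 := by
    rw [hint_eq 0 ⟨le_rfl, zero_le_one⟩]; simp
  have hmono : ∀ a ∈ Set.Icc (0:ℝ) 1, ∀ b ∈ Set.Icc (0:ℝ) 1, a ≤ b → h a ≤ h b := by
    intro a ha b hb hab
    rw [hint_eq a ha, hint_eq b hb]
    refine setIntegral_mono_set (hIntIoc 0 b le_rfl hb.2) (h'nn 0 b le_rfl hb.2) ?_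
    exact HasSubset.Subset.eventuallyLE (Set.Ioc_subset_Ioc le_rfl hab)
  have hrange : ∀ a ∈ Set.Icc (0:ℝ) 1, h a ∈ Set.Icc (0:ℝ) 1 := by
    intro a ha
    constructor
    · rw [← h0]; exact hmono 0 ⟨le_rfl, zero_le_one⟩ a ha ha.1
    · rw [← h1]; exact hmono a ha 1 ⟨zero_le_one, le_rfl⟩ ha.2
  have hcont : ContinuousOn h (Set.Icc (0:ℝ) 1) := by
    refine (intervalIntegral.continuousOn_primitive (f := h') (a := 0) (b := 1)
      (μ := volume) hIntIcc).congr ?_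
    intro x hx; exact hint_eq x hx
  -- generalized inverse facts
  have hmem : ∀ t : ℝ, t ≤ 1 → funInv h t ∈ {x : ℝ | x ∈ Set.Icc (0:ℝ) 1 ∧ t ≤ h x} := by
    intro t ht
    have hSeq : {x : ℝ | x ∈ Set.Icc (0:ℝ) 1 ∧ t ≤ h x}
        = Set.Icc (0:ℝ) 1 ∩ h ⁻¹' Set.Ici t := by
      ext x
      simp only [Set.mem_setOf_eq, Set.mem_inter_iff, Set.mem_preimage, Set.mem_Ici]
    have hclosed : IsClosed {x : ℝ | x ∈ Set.Icc (0:ℝ) 1 ∧ t ≤ h x} := by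
      rw [hSeq]; exact hcont.preimage_isClosed_of_isClosed isClosed_Icc isClosed_Ici
    have hne : Set.Nonempty {x : ℝ | x ∈ Set.Icc (0:ℝ) 1 ∧ t ≤ h x} :=
      ⟨1, ⟨zero_le_one, le_rfl⟩, by rw [h1]; exact ht⟩
    have hbdd : BddBelow {x : ℝ | x ∈ Set.Icc (0:ℝ) 1 ∧ t ≤ h x} :=
      ⟨0, fun x hx => hx.1.1⟩
    exact hclosed.csInf_mem hne hbdd
  have hgal : ∀ t : ℝ, t ≤ 1 → ∀ u ∈ Set.Icc (0:ℝ) 1, (funInv h t ≤ u ↔ t ≤ h u) := by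
    intro t ht u hu
    constructor
    · intro hle
      have hm := hmem t ht
      exact hm.2.trans (hmono _ hm.1 u hu hle)
    · intro htu
      exact csInf_le ⟨0, fun x hx => hx.1.1⟩ ⟨hu, htu⟩
  -- distribution functions live in [0,1]
  have hdist : ∀ (R : Measure ℝ), IsProbabilityMeasure R →
      ∀ x, distFun R x ∈ Set.Icc (0:ℝ) 1 := by
    intro R hR x
    constructor
    · exact ENNReal.toReal_nonneg
    · have hle : R (Set.Iic x) ≤ 1 := prob_le_one
      simpa [distFun] using ENNReal.toReal_mono (by norm_num) hle
  -- key pointwise identity of quantiles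
  have keyq : ∀ (R Rh : Measure ℝ), IsProbabilityMeasure R →
      (∀ x, distFun Rh x = h (distFun R x)) → ∀ t : ℝ, t ≤ 1 →
      quant Rh t = quant R (funInv h t) := by
    intro R Rh hR hcdf t ht
    unfold quant
    congr 1
    ext x
    simp only [Set.mem_setOf_eq, hcdf]
    exact (hgal t ht (distFun R x) (hdist R hR x)).symm
  -- first equality
  have hW2sq : W2 Ph Qh ^ 2 = ∫ t in Set.Ioo (0:ℝ) 1, (quant Ph t - quant Qh t) ^ 2 := by
    simp only [W2]
    rw [Real.sq_sqrt]
    exact integral_nonneg fun t => sq_nonneg _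
  have eq1 : W2 Ph Qh ^ 2
      = ∫ x in Set.Ioo (0:ℝ) 1, (quant P (funInv h x) - quant Q (funInv h x)) ^ 2 := by
    rw [hW2sq]
    refine setIntegral_congr_fun measurableSet_Ioo ?_
    intro t ht
    simp only [keyq P Ph hP hPhcdf t ht.2.le, keyq Q Qh hQ hQhcdf t ht.2.le]
  refine ⟨eq1, ?_⟩
  -- monotonicity/measurability of funInv
  have hfi_mono : MonotoneOn (funInv h) (Set.Iic (1:ℝ)) := by
    intro t ht t' ht' hle
    refine csInf_le_csInf ⟨0, fun x hx => hx.1.1⟩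
      ⟨1, ⟨zero_le_one, le_rfl⟩, by rw [h1]; exact ht'⟩
      fun x hx => ⟨hx.1, hle.trans hx.2⟩
  have hfi_meas : AEMeasurable (funInv h) (volume.restrict (Set.Ioo (0:ℝ) 1)) :=
    aemeasurable_restrict_of_monotoneOn measurableSet_Ioo
      (hfi_mono.mono fun x hx => hx.2.le)
  -- monotonicity/measurability of quantile functions
  have hq_mono : ∀ (R : Measure ℝ), IsProbabilityMeasure R →
      MonotoneOn (quant R) (Set.Ioo (0:ℝ) 1) := by
    intro R hR t ht t' ht' hle
    have hFmono : Monotone (distFun R) := by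
      intro x y hxy
      exact ENNReal.toReal_mono (measure_ne_top R _)
        (measure_mono (Set.Iic_subset_Iic.2 hxy))
    have hbdd : BddBelow {x : ℝ | t ≤ distFun R x} := by
      have htend : Tendsto (fun x : ℝ => distFun R x) atBot (𝓝 0) := by
        have ht1 : Tendsto (fun x : ℝ => R (Set.Iic x)) atBot
            (𝓝 (R (⋂ x : ℝ, Set.Iic x))) :=
          tendsto_measure_iInter_atBot (fun x => measurableSet_Iic.nullMeasurableSet)
            (fun a b hab => Set.Iic_subset_Iic.2 hab) ⟨0, measure_ne_top R _⟩
        have hempty : (⋂ x : ℝ, Set.Iic x) = (∅ : Set ℝ) := by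
          ext y
          simp only [Set.mem_iInter, Set.mem_Iic, Set.mem_empty_iff_false, iff_false,
            not_forall, not_le]
          exact ⟨y - 1, by linarith⟩
        rw [hempty, measure_empty] at ht1
        have := (ENNReal.tendsto_toReal (by simp)).comp ht1
        simpa [distFun, Function.comp_def] using this
      obtain ⟨x₀, hx₀⟩ := (htend.eventually (eventually_lt_nhds ht.1)).exists
      refine ⟨x₀, fun x hx => ?_⟩
      by_contra hcon
      push_neg at hcon
      exact absurd (hx.trans (hFmono hcon.le)) (not_le.2 hx₀)
    have hne : {x : ℝ | t' ≤ distFun R x}.Nonempty := by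
      have htend : Tendsto (fun x : ℝ => distFun R x) atTop (𝓝 1) := by
        have ht1 := tendsto_measure_Iic_atTop (μ := R)
        rw [measure_univ] at ht1
        have := (ENNReal.tendsto_toReal (by simp)).comp ht1
        simpa [distFun, Function.comp_def] using this
      exact (htend.eventually (eventually_ge_nhds ht'.2)).exists
    exact csInf_le_csInf hbdd hne fun x hx => hle.trans hx
  have hg_meas : AEMeasurable (fun y => (quant P y - quant Q y) ^ 2)
      (volume.restrict (Set.Ioo (0:ℝ) 1)) := by
    have hp := aemeasurable_restrict_of_monotoneOn (μ := volume) measurableSet_Ioo (hq_mono P hP)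
    have hq := aemeasurable_restrict_of_monotoneOn (μ := volume) measurableSet_Ioo (hq_mono Q hQ)
    exact (hp.sub hq).pow_const 2
  -- the two measures
  set μm : Measure ℝ := Measure.map (funInv h) (volume.restrict (Set.Ioo (0:ℝ) 1)) with hμm
  set νm : Measure ℝ := (volume.restrict (Set.Ioo (0:ℝ) 1)).withDensity
      (fun y => ENNReal.ofReal (h' y)) with hνm
  have hμfin : IsFiniteMeasure μm := by
    constructor
    rw [hμm, Measure.map_apply_of_aemeasurable hfi_meas MeasurableSet.univ,
      Set.preimage_univ, Measure.restrict_apply_univ, Real.volume_Ioo]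
    exact ENNReal.ofReal_lt_top
  have hlin : ∀ a : ℝ, a ∈ Set.Icc (0:ℝ) 1 →
      ∫⁻ y in Set.Ioc (0:ℝ) a, ENNReal.ofReal (h' y) = ENNReal.ofReal (h a) := by
    intro a ha
    rw [hint_eq a ha]
    exact (ofReal_integral_eq_lintegral_ofReal (hIntIoc 0 a le_rfl ha.2)
      (h'nn 0 a le_rfl ha.2)).symm
  have vol_sandwich : ∀ (s : Set ℝ) (c : ℝ), 0 ≤ c → Set.Ioo 0 c ⊆ s → s ⊆ Set.Ioc 0 c →
      volume s = ENNReal.ofReal c := by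
    intro s c hc hsub1 hsub2
    refine le_antisymm ?_ ?_
    · calc volume s ≤ volume (Set.Ioc 0 c) := measure_mono hsub2
        _ = ENNReal.ofReal c := by rw [Real.volume_Ioc, sub_zero]
    · calc ENNReal.ofReal c = volume (Set.Ioo 0 c) := by rw [Real.volume_Ioo, sub_zero]
        _ ≤ volume s := measure_mono hsub1
  have lint_sandwich : ∀ (s : Set ℝ) (c : ℝ), Set.Ioo 0 c ⊆ s → s ⊆ Set.Ioc 0 c →
      ∫⁻ y in s, ENNReal.ofReal (h' y)
        = ∫⁻ y in Set.Ioc (0:ℝ) c, ENNReal.ofReal (h' y) := by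
    intro s c hsub1 hsub2
    refine le_antisymm (lintegral_mono_set hsub2) ?_
    calc ∫⁻ y in Set.Ioc (0:ℝ) c, ENNReal.ofReal (h' y)
        = ∫⁻ y in Set.Ioo (0:ℝ) c, ENNReal.ofReal (h' y) :=
          (setLIntegral_congr Ioo_ae_eq_Ioc).symm
      _ ≤ ∫⁻ y in s, ENNReal.ofReal (h' y) := lintegral_mono_set hsub1
  have hμν : μm = νm := by
    refine Measure.ext_of_Iic μm νm fun a => ?_
    rw [hμm, Measure.map_apply_of_aemeasurable hfi_meas measurableSet_Iic,
      Measure.restrict_apply' measurableSet_Ioo, hνm,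
      withDensity_apply _ measurableSet_Iic, Measure.restrict_restrict measurableSet_Iic]
    rcases lt_or_ge a 0 with ha | ha
    · have h1s : funInv h ⁻¹' Set.Iic a ∩ Set.Ioo 0 1 = ∅ := by
        refine Set.eq_empty_iff_forall_notMem.2 fun x hx => ?_
        have h0f : (0:ℝ) ≤ funInv h x := (hmem x hx.2.2.le).1.1
        exact absurd (h0f.trans hx.1) (not_le.2 ha)
      have h2s : Set.Iic a ∩ Set.Ioo 0 1 = (∅ : Set ℝ) := by
        refine Set.eq_empty_iff_forall_notMem.2 fun y hy => ?_
        exact absurd hy.2.1 (not_lt.2 (hy.1.trans ha.le))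
      rw [h1s, h2s]
      simp
    rcases le_or_gt a 1 with ha1 | ha1
    · have hset : funInv h ⁻¹' Set.Iic a ∩ Set.Ioo 0 1 = Set.Iic (h a) ∩ Set.Ioo 0 1 := by
        ext x
        simp only [Set.mem_inter_iff, Set.mem_preimage, Set.mem_Iic, Set.mem_Ioo]
        constructor
        · rintro ⟨hfa, hx⟩
          exact ⟨(hgal x hx.2.le a ⟨ha, ha1⟩).1 hfa, hx⟩
        · rintro ⟨hha, hx⟩
          exact ⟨(hgal x hx.2.le a ⟨ha, ha1⟩).2 hha, hx⟩
      have hha := hrange a ⟨ha, ha1⟩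
      have hveq : volume (Set.Iic (h a) ∩ Set.Ioo 0 1) = ENNReal.ofReal (h a) := by
        refine vol_sandwich _ (h a) hha.1
          (fun x hx => ⟨hx.2.le, hx.1, lt_of_lt_of_le hx.2 hha.2⟩)
          (fun x hx => ⟨hx.2.1, hx.1⟩)
      have hleq : ∫⁻ y in Set.Iic a ∩ Set.Ioo 0 1, ENNReal.ofReal (h' y)
          = ENNReal.ofReal (h a) := by
        have s1 : Set.Ioo (0:ℝ) a ⊆ Set.Iic a ∩ Set.Ioo 0 1 :=
          fun y hy => ⟨hy.2.le, hy.1, lt_of_lt_of_le hy.2 ha1⟩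
        have s2 : Set.Iic a ∩ Set.Ioo 0 1 ⊆ Set.Ioc 0 a :=
          fun y hy => ⟨hy.2.1, hy.1⟩
        rw [lint_sandwich _ a s1 s2, hlin a ⟨ha, ha1⟩]
      rw [hset, hveq, hleq]
    · have hset : funInv h ⁻¹' Set.Iic a ∩ Set.Ioo 0 1 = Set.Ioo 0 1 :=
        Set.inter_eq_right.2 fun x hx => ((hmem x hx.2.le).1.2).trans ha1.le
      have hset2 : Set.Iic a ∩ Set.Ioo 0 1 = Set.Ioo 0 1 :=
        Set.inter_eq_right.2 fun y hy => hy.2.le.trans ha1.le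
      rw [hset, hset2, lint_sandwich _ 1 (fun y hy => hy) Set.Ioo_subset_Ioc_self,
        hlin 1 ⟨zero_le_one, le_rfl⟩, h1, Real.volume_Ioo]
      norm_num
  have hgae : AEStronglyMeasurable (fun y => (quant P y - quant Q y) ^ 2) μm := by
    rw [hμν, hνm]
    exact hg_meas.aestronglyMeasurable.mono_ac (withDensity_absolutelyContinuous _ _)
  have int1 : (∫ x in Set.Ioo (0:ℝ) 1, (quant P (funInv h x) - quant Q (funInv h x)) ^ 2)
      = ∫ y, (quant P y - quant Q y) ^ 2 ∂μm :=
    (integral_map hfi_meas hgae).symm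
  have int2 : (∫ y, (quant P y - quant Q y) ^ 2 ∂νm)
      = ∫ y in Set.Ioo (0:ℝ) 1, (quant P y - quant Q y) ^ 2 * h' y := by
    rw [hνm]
    have hofr : (fun y => ENNReal.ofReal (h' y))
        = (fun y => ((Real.toNNReal (h' y) : ℝ≥0) : ℝ≥0∞)) := rfl
    rw [hofr, integral_withDensity_eq_integral_smul h'meas.real_toNNReal]
    refine integral_congr_ae ?_
    filter_upwards [ae_restrict_of_ae_restrict_of_subset hIcc01 h'bdd] with y hy
    rw [NNReal.smul_def, smul_eq_mul, Real.coe_toNNReal _ hy.1, mul_comm]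
  rw [eq1, int1, hμν, int2]

end
end

section
/- Let α ∈ [0,1) and let P, Q ∈ F₂ have quantile functions F⁻¹ and G⁻¹. Then the common trimming distance T_α(P,Q) := min_{h ∈ C_α} W₂(P_h, Q_h) equals zero if and only if ℓ({y ∈ (0,1) : F⁻¹(y) ≠ G⁻¹(y)}) ≤ α, where ℓ denotes Lebesgue measure. -/
open MeasureTheory ProbabilityTheory Filter Topology Asymptotics
open scoped ENNReal NNReal

noncomputable section

section
open Set

namespace CTAux

lemma distFun_nonneg (R : Measure ℝ) (x : ℝ) : 0 ≤ distFun R x := ENNReal.toReal_nonneg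

lemma distFun_eq_cdf (R : Measure ℝ) [IsProbabilityMeasure R] (x : ℝ) :
    distFun R x = ProbabilityTheory.cdf R x := (ProbabilityTheory.cdf_eq_real R x).symm

lemma distFun_le_one (R : Measure ℝ) [IsProbabilityMeasure R] (x : ℝ) : distFun R x ≤ 1 := by
  rw [distFun_eq_cdf]; exact cdf_le_one R x

lemma distFun_mem_Icc (R : Measure ℝ) [IsProbabilityMeasure R] (x : ℝ) :
    distFun R x ∈ Icc (0:ℝ) 1 := ⟨distFun_nonneg R x, distFun_le_one R x⟩

lemma distFun_mono (R : Measure ℝ) [IsProbabilityMeasure R] : Monotone (distFun R) := by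
  intro x y hxy; rw [distFun_eq_cdf, distFun_eq_cdf]; exact monotone_cdf R hxy

lemma quant_le_iff (R : Measure ℝ) [IsProbabilityMeasure R] {t : ℝ} (x : ℝ)
    (ht0 : 0 < t) (ht1 : t < 1) : quant R t ≤ x ↔ t ≤ distFun R x := by
  have hbdd : BddBelow {x : ℝ | t ≤ distFun R x} := by
    obtain ⟨y₀, hy₀⟩ : ∃ y₀, ProbabilityTheory.cdf R y₀ < t :=
      ((tendsto_cdf_atBot R).eventually_lt_const ht0).exists
    refine ⟨y₀, fun z hz => ?_⟩
    by_contra hzy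
    have h2 : distFun R z ≤ distFun R y₀ := distFun_mono R (le_of_not_ge hzy)
    rw [distFun_eq_cdf R y₀] at h2
    exact absurd (le_trans hz h2) (not_le.2 hy₀)
  constructor
  · intro hqx
    have key : ∀ u ∈ Ioi x, t ≤ distFun R u := by
      intro u hu
      have hne : {x : ℝ | t ≤ distFun R x}.Nonempty := by
        obtain ⟨y₁, hy₁⟩ := ((tendsto_cdf_atTop R).eventually_const_lt ht1).exists
        exact ⟨y₁, by rw [Set.mem_setOf_eq, distFun_eq_cdf]; exact hy₁.le⟩
      obtain ⟨z, hzS, hzu⟩ := exists_lt_of_csInf_lt hne (lt_of_le_of_lt hqx hu)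
      exact le_trans hzS (distFun_mono R hzu.le)
    have rc : ContinuousWithinAt (ProbabilityTheory.cdf R) (Ioi x) x :=
      ((ProbabilityTheory.cdf R).right_continuous x).mono Ioi_subset_Ici_self
    have : t ≤ ProbabilityTheory.cdf R x :=
      ge_of_tendsto rc (eventually_nhdsWithin_of_forall (fun u hu => by
        rw [← distFun_eq_cdf]; exact key u hu))
    rwa [distFun_eq_cdf]
  · intro h
    exact csInf_le hbdd h

lemma volume_Ioc_inter_Ioo {a : ℝ} (ha0 : 0 ≤ a) (ha1 : a ≤ 1) :
    volume (Ioc 0 a ∩ Ioo 0 1) = ENNReal.ofReal a := by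
  apply le_antisymm
  · refine le_trans (measure_mono inter_subset_left) ?_
    rw [Real.volume_Ioc, sub_zero]
  · have hsub : Ioo 0 a ⊆ Ioc 0 a ∩ Ioo 0 1 :=
      fun x hx => ⟨⟨hx.1, hx.2.le⟩, ⟨hx.1, lt_of_lt_of_le hx.2 ha1⟩⟩
    calc ENNReal.ofReal a = volume (Ioo 0 a) := by rw [Real.volume_Ioo, sub_zero]
    _ ≤ _ := measure_mono hsub

lemma measurable_quantInd (R : Measure ℝ) [IsProbabilityMeasure R] :
    Measurable ((Set.Ioo (0:ℝ) 1).indicator (quant R)) := by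
  apply measurable_of_Iic
  intro x
  rcases le_or_gt 0 x with h0x | h0x
  · have hset : ((Set.Ioo (0:ℝ) 1).indicator (quant R)) ⁻¹' (Iic x) =
        (Ioc 0 (distFun R x) ∩ Ioo 0 1) ∪ (Ioo (0:ℝ) 1)ᶜ := by
      ext t
      by_cases ht : t ∈ Ioo (0:ℝ) 1
      · simp only [Set.mem_preimage, Set.indicator_of_mem ht, mem_Iic, Set.mem_union,
          Set.mem_inter_iff, mem_Ioc, Set.mem_compl_iff]
        constructor
        · intro h
          exact Or.inl ⟨⟨ht.1, (quant_le_iff R x ht.1 ht.2).1 h⟩, ht⟩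
        · rintro (⟨⟨_, h2⟩, _⟩ | h)
          · exact (quant_le_iff R x ht.1 ht.2).2 h2
          · exact absurd ht h
      · simp only [Set.mem_preimage, Set.indicator_of_notMem ht, mem_Iic, Set.mem_union,
          Set.mem_compl_iff]
        exact ⟨fun _ => Or.inr ht, fun _ => h0x⟩
    rw [hset]
    exact ((measurableSet_Ioc.inter measurableSet_Ioo).union measurableSet_Ioo.compl)
  · have hset : ((Set.Ioo (0:ℝ) 1).indicator (quant R)) ⁻¹' (Iic x) =
        Ioc 0 (distFun R x) ∩ Ioo 0 1 := by
      ext t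
      by_cases ht : t ∈ Ioo (0:ℝ) 1
      · simp only [Set.mem_preimage, Set.indicator_of_mem ht, mem_Iic,
          Set.mem_inter_iff, mem_Ioc]
        constructor
        · intro h
          exact ⟨⟨ht.1, (quant_le_iff R x ht.1 ht.2).1 h⟩, ht⟩
        · rintro ⟨⟨_, h2⟩, _⟩
          exact (quant_le_iff R x ht.1 ht.2).2 h2
      · simp only [Set.mem_preimage, Set.indicator_of_notMem ht, mem_Iic,
          Set.mem_inter_iff]
        exact ⟨fun h => absurd (h.trans_lt h0x) (lt_irrefl 0), fun h => absurd h.2 ht⟩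
    rw [hset]
    exact measurableSet_Ioc.inter measurableSet_Ioo


def tauBar (h : ℝ → ℝ) (t : ℝ) : ℝ := funInv h (min t 1)

section FunInv

variable {h : ℝ → ℝ}

lemma funInv_spec (hmono : MonotoneOn h (Icc 0 1)) (hcont : ContinuousOn h (Icc 0 1))
    (hone : h 1 = 1) {t : ℝ} (ht1 : t ≤ 1) :
    funInv h t ∈ Icc (0:ℝ) 1 ∧ t ≤ h (funInv h t) := by
  have hset : {x | x ∈ Set.Icc (0:ℝ) 1 ∧ t ≤ h x} = Icc (0:ℝ) 1 ∩ h ⁻¹' (Ici t) := rfl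
  have hclosed : IsClosed {x | x ∈ Set.Icc (0:ℝ) 1 ∧ t ≤ h x} := by
    rw [hset]
    exact hcont.preimage_isClosed_of_isClosed isClosed_Icc isClosed_Ici
  have hne : {x | x ∈ Set.Icc (0:ℝ) 1 ∧ t ≤ h x}.Nonempty :=
    ⟨1, ⟨right_mem_Icc.2 zero_le_one, by rw [hone]; exact ht1⟩⟩
  have hbdd : BddBelow {x | x ∈ Set.Icc (0:ℝ) 1 ∧ t ≤ h x} := ⟨0, fun y hy => hy.1.1⟩
  exact hclosed.csInf_mem hne hbdd

lemma funInv_le_iff (hmono : MonotoneOn h (Icc 0 1)) (hcont : ContinuousOn h (Icc 0 1))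
    (hone : h 1 = 1) {t : ℝ} (ht1 : t ≤ 1) {y : ℝ} (hy : y ∈ Icc (0:ℝ) 1) :
    funInv h t ≤ y ↔ t ≤ h y := by
  obtain ⟨hmem, hth⟩ := funInv_spec hmono hcont hone ht1
  constructor
  · intro hle; exact hth.trans (hmono hmem hy hle)
  · intro hth'; exact csInf_le ⟨0, fun z hz => hz.1.1⟩ ⟨hy, hth'⟩

lemma funInv_mem_Ioo (hmono : MonotoneOn h (Icc 0 1)) (hcont : ContinuousOn h (Icc 0 1))
    (hzero : h 0 = 0) (hone : h 1 = 1) {t : ℝ} (ht0 : 0 < t) (ht1 : t < 1) :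
    funInv h t ∈ Ioo (0:ℝ) 1 := by
  obtain ⟨hmem, hth⟩ := funInv_spec hmono hcont hone ht1.le
  constructor
  · rcases eq_or_lt_of_le hmem.1 with heq | hlt
    · exfalso
      rw [← heq, hzero] at hth
      exact absurd hth (not_le.2 ht0)
    · exact hlt
  · rcases eq_or_lt_of_le hmem.2 with heq | hlt
    · exfalso
      have hlt' : ∀ y ∈ Ico (0:ℝ) 1, h y < t := by
        intro y hy
        by_contra hc
        have := csInf_le (⟨0, fun z hz => hz.1.1⟩ :
            BddBelow {x | x ∈ Set.Icc (0:ℝ) 1 ∧ t ≤ h x})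
          (⟨⟨hy.1, hy.2.le⟩, le_of_not_gt hc⟩ : y ∈ {x | x ∈ Set.Icc (0:ℝ) 1 ∧ t ≤ h x})
        rw [show sInf {x | x ∈ Set.Icc (0:ℝ) 1 ∧ t ≤ h x} = funInv h t from rfl, heq] at this
        exact absurd (lt_of_le_of_lt this hy.2) (lt_irrefl 1)
      have hnb : (𝓝[Ico (0:ℝ) 1] 1).NeBot := right_nhdsWithin_Ico_neBot zero_lt_one
      have htd : Tendsto h (𝓝[Ico (0:ℝ) 1] 1) (𝓝 (h 1)) :=
        ((hcont 1 (right_mem_Icc.2 zero_le_one)).mono Ico_subset_Icc_self)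
      have : h 1 ≤ t := le_of_tendsto htd
        (eventually_nhdsWithin_of_forall fun y hy => (hlt' y hy).le)
      rw [hone] at this
      exact absurd (lt_of_le_of_lt this ht1) (lt_irrefl 1)
    · exact hlt

lemma tauBar_eq {t : ℝ} (ht1 : t ≤ 1) : tauBar h t = funInv h t := by
  rw [tauBar, min_eq_left ht1]

lemma tauBar_monotone (hone : h 1 = 1) : Monotone (tauBar h) := by
  intro t s hts
  refine csInf_le_csInf ⟨0, fun z hz => hz.1.1⟩
    ⟨1, ⟨right_mem_Icc.2 zero_le_one, by rw [hone]; exact min_le_right s 1⟩⟩ ?_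
  intro z hz
  exact ⟨hz.1, le_trans (min_le_min hts le_rfl) hz.2⟩

lemma tauBar_measurable (hone : h 1 = 1) : Measurable (tauBar h) :=
  (tauBar_monotone hone).measurable

lemma tauBar_mem_Icc (hmono : MonotoneOn h (Icc 0 1)) (hcont : ContinuousOn h (Icc 0 1))
    (hone : h 1 = 1) (t : ℝ) : tauBar h t ∈ Icc (0:ℝ) 1 :=
  (funInv_spec hmono hcont hone (min_le_right t 1)).1

-- composition of quantiles
lemma quant_comp (R Rh : Measure ℝ) [IsProbabilityMeasure R]
    (hmono : MonotoneOn h (Icc 0 1)) (hcont : ContinuousOn h (Icc 0 1)) (hone : h 1 = 1)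
    (hcdf : ∀ x, distFun Rh x = h (distFun R x)) {t : ℝ} (ht1 : t ≤ 1) :
    quant Rh t = quant R (funInv h t) := by
  unfold quant
  congr 1
  ext x
  rw [Set.mem_setOf_eq, Set.mem_setOf_eq, hcdf x]
  exact (funInv_le_iff hmono hcont hone ht1 (distFun_mem_Icc R x)).symm

end FunInv

section Rep

variable {h h' : ℝ → ℝ} {C : ℝ}

lemma rep_integrableOn (hmeas : Measurable h')
    (hbd : ∀ᵐ y ∂(volume.restrict (Icc (0:ℝ) 1)), 0 ≤ h' y ∧ h' y ≤ C)
    {s : Set ℝ} (hsub : s ⊆ Icc (0:ℝ) 1) :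
    IntegrableOn h' s := by
  have hae : ∀ᵐ y ∂(volume.restrict s), 0 ≤ h' y ∧ h' y ≤ C :=
    ae_restrict_of_ae_restrict_of_subset hsub hbd
  refine Integrable.mono' (g := fun _ => C) (integrableOn_const ?_)
    hmeas.aestronglyMeasurable ?_
  · exact (lt_of_le_of_lt (measure_mono hsub) measure_Icc_lt_top).ne
  · filter_upwards [hae] with y hy
    rw [Real.norm_eq_abs, abs_of_nonneg hy.1]; exact hy.2

lemma rep_diff (hmeas : Measurable h')
    (hbd : ∀ᵐ y ∂(volume.restrict (Icc (0:ℝ) 1)), 0 ≤ h' y ∧ h' y ≤ C)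
    (hrep : ∀ x ∈ Icc (0:ℝ) 1, h x = ∫ y in Ioc (0:ℝ) x, h' y)
    {x y : ℝ} (hx : x ∈ Icc (0:ℝ) 1) (hy : y ∈ Icc (0:ℝ) 1) (hxy : x ≤ y) :
    h y - h x = ∫ u in Ioc x y, h' u := by
  have hu : Ioc (0:ℝ) x ∪ Ioc x y = Ioc 0 y := Ioc_union_Ioc_eq_Ioc hx.1 hxy
  have hsub1 : Ioc (0:ℝ) x ⊆ Icc (0:ℝ) 1 :=
    fun z hz => ⟨hz.1.le, le_trans hz.2 hx.2⟩
  have hsub2 : Ioc x y ⊆ Icc (0:ℝ) 1 :=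
    fun z hz => ⟨le_trans hx.1 hz.1.le, le_trans hz.2 hy.2⟩
  rw [hrep y hy, hrep x hx, ← hu,
    setIntegral_union (Set.Ioc_disjoint_Ioc_of_le le_rfl) measurableSet_Ioc
      (rep_integrableOn hmeas hbd hsub1) (rep_integrableOn hmeas hbd hsub2)]
  ring

lemma rep_monoOn (hmeas : Measurable h')
    (hbd : ∀ᵐ y ∂(volume.restrict (Icc (0:ℝ) 1)), 0 ≤ h' y ∧ h' y ≤ C)
    (hrep : ∀ x ∈ Icc (0:ℝ) 1, h x = ∫ y in Ioc (0:ℝ) x, h' y) :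
    MonotoneOn h (Icc (0:ℝ) 1) := by
  intro x hx y hy hxy
  have hd := rep_diff hmeas hbd hrep hx hy hxy
  have hnn : 0 ≤ ∫ u in Ioc x y, h' u := by
    refine integral_nonneg_of_ae ?_
    have : Ioc x y ⊆ Icc (0:ℝ) 1 := fun z hz => ⟨le_trans hx.1 hz.1.le, le_trans hz.2 hy.2⟩
    filter_upwards [ae_restrict_of_ae_restrict_of_subset this hbd] with z hz using hz.1
  linarith

lemma rep_le_mul (hmeas : Measurable h')
    (hbd : ∀ᵐ y ∂(volume.restrict (Icc (0:ℝ) 1)), 0 ≤ h' y ∧ h' y ≤ C)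
    (hrep : ∀ x ∈ Icc (0:ℝ) 1, h x = ∫ y in Ioc (0:ℝ) x, h' y)
    {x y : ℝ} (hx : x ∈ Icc (0:ℝ) 1) (hy : y ∈ Icc (0:ℝ) 1) (hxy : x ≤ y) :
    h y - h x ≤ C * (y - x) := by
  rw [rep_diff hmeas hbd hrep hx hy hxy]
  have hsub : Ioc x y ⊆ Icc (0:ℝ) 1 := fun z hz => ⟨le_trans hx.1 hz.1.le, le_trans hz.2 hy.2⟩
  have hle : ∫ u in Ioc x y, h' u ≤ ∫ _ in Ioc x y, C := by
    refine integral_mono_ae (rep_integrableOn hmeas hbd hsub)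
      (integrableOn_const measure_Ioc_lt_top.ne) ?_
    filter_upwards [ae_restrict_of_ae_restrict_of_subset hsub hbd] with z hz using hz.2
  refine hle.trans ?_
  rw [setIntegral_const, Real.volume_real_Ioc_of_le hxy, smul_eq_mul,
    mul_comm]

lemma rep_contOn (hC : 0 ≤ C) (hmeas : Measurable h')
    (hbd : ∀ᵐ y ∂(volume.restrict (Icc (0:ℝ) 1)), 0 ≤ h' y ∧ h' y ≤ C)
    (hrep : ∀ x ∈ Icc (0:ℝ) 1, h x = ∫ y in Ioc (0:ℝ) x, h' y) :
    ContinuousOn h (Icc (0:ℝ) 1) := by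
  refine (LipschitzOnWith.of_dist_le_mul (K := C.toNNReal) ?_).continuousOn
  intro x hx y hy
  rw [Real.coe_toNNReal C hC, Real.dist_eq, Real.dist_eq]
  rcases le_total x y with hxy | hxy
  · rw [abs_sub_comm, abs_of_nonneg (sub_nonneg.2 (rep_monoOn hmeas hbd hrep hx hy hxy)),
      abs_sub_comm, abs_of_nonneg (sub_nonneg.2 hxy)]
    exact rep_le_mul hmeas hbd hrep hx hy hxy
  · rw [abs_of_nonneg (sub_nonneg.2 (rep_monoOn hmeas hbd hrep hy hx hxy)),
      abs_of_nonneg (sub_nonneg.2 hxy)]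
    exact rep_le_mul hmeas hbd hrep hy hx hxy

lemma rep_zero (hrep : ∀ x ∈ Icc (0:ℝ) 1, h x = ∫ y in Ioc (0:ℝ) x, h' y) : h 0 = 0 := by
  rw [hrep 0 (left_mem_Icc.2 zero_le_one), Set.Ioc_self, Measure.restrict_empty,
    integral_zero_measure]

lemma rep_mem_Icc (hmeas : Measurable h')
    (hbd : ∀ᵐ y ∂(volume.restrict (Icc (0:ℝ) 1)), 0 ≤ h' y ∧ h' y ≤ C)
    (hrep : ∀ x ∈ Icc (0:ℝ) 1, h x = ∫ y in Ioc (0:ℝ) x, h' y)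
    (hone : h 1 = 1) {y : ℝ} (hy : y ∈ Icc (0:ℝ) 1) : h y ∈ Icc (0:ℝ) 1 := by
  constructor
  · have := rep_monoOn hmeas hbd hrep (left_mem_Icc.2 zero_le_one) hy hy.1
    rwa [rep_zero hrep] at this
  · have := rep_monoOn hmeas hbd hrep hy (right_mem_Icc.2 zero_le_one) hy.2
    rwa [hone] at this

end Rep

section Push

variable {h h' : ℝ → ℝ} {C : ℝ}

lemma lintegral_ofReal_h'_Ioc (hmeas : Measurable h')
    (hbd : ∀ᵐ y ∂(volume.restrict (Icc (0:ℝ) 1)), 0 ≤ h' y ∧ h' y ≤ C)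
    (hrep : ∀ x ∈ Icc (0:ℝ) 1, h x = ∫ y in Ioc (0:ℝ) x, h' y)
    {a : ℝ} (ha : a ∈ Icc (0:ℝ) 1) :
    ∫⁻ y in Ioc (0:ℝ) a, ENNReal.ofReal (h' y) = ENNReal.ofReal (h a) := by
  have hsub : Ioc (0:ℝ) a ⊆ Icc (0:ℝ) 1 := fun z hz => ⟨hz.1.le, le_trans hz.2 ha.2⟩
  have hnn : 0 ≤ᵐ[volume.restrict (Ioc (0:ℝ) a)] h' := by
    filter_upwards [ae_restrict_of_ae_restrict_of_subset hsub hbd] with z hz using hz.1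
  rw [hrep a ha]
  exact (ofReal_integral_eq_lintegral_ofReal (rep_integrableOn hmeas hbd hsub) hnn).symm

lemma map_tauBar_eq (hC : 0 ≤ C) (hmeas : Measurable h')
    (hbd : ∀ᵐ y ∂(volume.restrict (Icc (0:ℝ) 1)), 0 ≤ h' y ∧ h' y ≤ C)
    (hrep : ∀ x ∈ Icc (0:ℝ) 1, h x = ∫ y in Ioc (0:ℝ) x, h' y) (hone : h 1 = 1) :
    Measure.map (tauBar h) (volume.restrict (Ioo (0:ℝ) 1)) =
      volume.withDensity ((Ioc (0:ℝ) 1).indicator fun y => ENNReal.ofReal (h' y)) := by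
  have hmono := rep_monoOn hmeas hbd hrep
  have hcont := rep_contOn hC hmeas hbd hrep
  have hτ := tauBar_measurable (h := h) hone
  have hfin : IsFiniteMeasure (Measure.map (tauBar h) (volume.restrict (Ioo (0:ℝ) 1))) := by
    constructor
    rw [Measure.map_apply hτ MeasurableSet.univ, Set.preimage_univ,
      Measure.restrict_apply MeasurableSet.univ, Set.univ_inter, Real.volume_Ioo]
    simp
  refine Measure.ext_of_Iic _ _ (fun a => ?_)
  have hRHS : (volume.withDensity ((Ioc (0:ℝ) 1).indicator fun y => ENNReal.ofReal (h' y)))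
      (Iic a) = ∫⁻ y in Ioc (0:ℝ) 1 ∩ Iic a, ENNReal.ofReal (h' y) := by
    rw [withDensity_apply _ measurableSet_Iic, lintegral_indicator measurableSet_Ioc,
      Measure.restrict_restrict measurableSet_Ioc]
  rw [Measure.map_apply hτ measurableSet_Iic, Measure.restrict_apply' measurableSet_Ioo, hRHS]
  rcases lt_or_ge a 0 with ha | ha
  · have h1 : tauBar h ⁻¹' Iic a ∩ Ioo 0 1 = ∅ := by
      rw [Set.eq_empty_iff_forall_notMem]
      rintro t ⟨hta, ht⟩
      have h0 := (tauBar_mem_Icc hmono hcont hone t).1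
      rw [Set.mem_preimage, mem_Iic] at hta
      linarith
    have h2 : Ioc (0:ℝ) 1 ∩ Iic a = ∅ := by
      rw [Set.eq_empty_iff_forall_notMem]
      rintro y ⟨hy1, hy2⟩
      rw [mem_Iic] at hy2
      have := hy1.1
      linarith
    rw [h1, h2]
    simp
  · rcases le_or_gt a 1 with ha1 | ha1
    · have hmem : a ∈ Icc (0:ℝ) 1 := ⟨ha, ha1⟩
      have h2 : Ioc (0:ℝ) 1 ∩ Iic a = Ioc 0 a := by
        rw [Set.Ioc_inter_Iic, min_eq_right ha1]
      have h1 : tauBar h ⁻¹' Iic a ∩ Ioo 0 1 = Ioc 0 (h a) ∩ Ioo 0 1 := by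
        ext t
        constructor
        · rintro ⟨hta, ht⟩
          rw [Set.mem_preimage, mem_Iic, tauBar_eq ht.2.le,
            funInv_le_iff hmono hcont hone ht.2.le hmem] at hta
          exact ⟨⟨ht.1, hta⟩, ht⟩
        · rintro ⟨hta, ht⟩
          refine ⟨?_, ht⟩
          rw [Set.mem_preimage, mem_Iic, tauBar_eq ht.2.le,
            funInv_le_iff hmono hcont hone ht.2.le hmem]
          exact hta.2
      rw [h1, h2, volume_Ioc_inter_Ioo (rep_mem_Icc hmeas hbd hrep hone hmem).1
        (rep_mem_Icc hmeas hbd hrep hone hmem).2,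
        lintegral_ofReal_h'_Ioc hmeas hbd hrep hmem]
    · have h1 : tauBar h ⁻¹' Iic a ∩ Ioo 0 1 = Ioo 0 1 := by
        refine Set.inter_eq_right.2 (fun t ht => ?_)
        rw [Set.mem_preimage, mem_Iic]
        exact le_trans (tauBar_mem_Icc hmono hcont hone t).2 ha1.le
      have h2 : Ioc (0:ℝ) 1 ∩ Iic a = Ioc 0 1 :=
        Set.inter_eq_left.2 fun y hy => le_trans hy.2 ha1.le
      rw [h1, h2, Real.volume_Ioo,
        lintegral_ofReal_h'_Ioc hmeas hbd hrep (right_mem_Icc.2 zero_le_one), hone]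
      norm_num

end Push

lemma map_quantInd_eq (R : Measure ℝ) [IsProbabilityMeasure R] :
    Measure.map ((Ioo (0:ℝ) 1).indicator (quant R)) (volume.restrict (Ioo (0:ℝ) 1)) = R := by
  have hq := measurable_quantInd R
  have hfin : IsFiniteMeasure (Measure.map ((Ioo (0:ℝ) 1).indicator (quant R))
      (volume.restrict (Ioo (0:ℝ) 1))) := by
    constructor
    rw [Measure.map_apply hq MeasurableSet.univ, Set.preimage_univ,
      Measure.restrict_apply MeasurableSet.univ, Set.univ_inter, Real.volume_Ioo]
    simp
  refine Measure.ext_of_Iic _ _ (fun a => ?_)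
  rw [Measure.map_apply hq measurableSet_Iic, Measure.restrict_apply' measurableSet_Ioo]
  have hset : ((Ioo (0:ℝ) 1).indicator (quant R)) ⁻¹' (Iic a) ∩ Ioo 0 1
      = Ioc 0 (distFun R a) ∩ Ioo 0 1 := by
    ext t
    constructor
    · rintro ⟨hta, ht⟩
      rw [Set.mem_preimage, mem_Iic, Set.indicator_of_mem ht] at hta
      exact ⟨⟨ht.1, (quant_le_iff R a ht.1 ht.2).1 hta⟩, ht⟩
    · rintro ⟨hta, ht⟩
      refine ⟨?_, ht⟩
      rw [Set.mem_preimage, mem_Iic, Set.indicator_of_mem ht]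
      exact (quant_le_iff R a ht.1 ht.2).2 hta.2
  rw [hset, volume_Ioc_inter_Ioo (distFun_nonneg R a) (distFun_le_one R a)]
  unfold distFun
  rw [ENNReal.ofReal_toReal (measure_ne_top R _)]

lemma lintegral_quantInd_sq_lt_top (R : Measure ℝ) [IsProbabilityMeasure R]
    (hm : ∫⁻ x, ENNReal.ofReal (x ^ 2) ∂(R) < ⊤) :
    ∫⁻ t in Ioo (0:ℝ) 1, ENNReal.ofReal (((Ioo (0:ℝ) 1).indicator (quant R)) t ^ 2) < ⊤ := by
  have hg : Measurable fun x : ℝ => ENNReal.ofReal (x ^ 2) :=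
    (measurable_id.pow_const 2).ennreal_ofReal
  have heq := lintegral_map hg (measurable_quantInd R)
    (μ := volume.restrict (Ioo (0:ℝ) 1))
  rw [map_quantInd_eq R] at heq
  rw [← heq]
  exact hm

lemma measurableSet_D (P Q : Measure ℝ) [IsProbabilityMeasure P] [IsProbabilityMeasure Q] :
    MeasurableSet {y ∈ Ioo (0:ℝ) 1 | quant P y ≠ quant Q y} := by
  have hset : {y ∈ Ioo (0:ℝ) 1 | quant P y ≠ quant Q y} =
      ⋃ r : ℚ, ((Ioc (distFun Q r) (distFun P r) ∪ Ioc (distFun P r) (distFun Q r))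
        ∩ Ioo 0 1) := by
    ext y
    simp only [Set.mem_setOf_eq, Set.mem_iUnion, Set.mem_inter_iff, Set.mem_union, mem_Ioc]
    constructor
    · rintro ⟨hy, hne⟩
      rcases lt_or_gt_of_ne hne with hlt | hlt
      · obtain ⟨r, hr1, hr2⟩ := exists_rat_btwn hlt
        refine ⟨r, Or.inl ⟨?_, (quant_le_iff P r hy.1 hy.2).1 hr1.le⟩, hy⟩
        by_contra hc
        push_neg at hc
        exact absurd ((quant_le_iff Q r hy.1 hy.2).2 hc) (not_le.2 hr2)
      · obtain ⟨r, hr1, hr2⟩ := exists_rat_btwn hlt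
        refine ⟨r, Or.inr ⟨?_, (quant_le_iff Q r hy.1 hy.2).1 hr1.le⟩, hy⟩
        by_contra hc
        push_neg at hc
        exact absurd ((quant_le_iff P r hy.1 hy.2).2 hc) (not_le.2 hr2)
    · rintro ⟨r, hr | hr, hy⟩
      · refine ⟨hy, fun he => ?_⟩
        have h1 : quant P y ≤ (r:ℝ) := (quant_le_iff P r hy.1 hy.2).2 hr.2
        have h2 : ¬ quant Q y ≤ (r:ℝ) := fun hc =>
          absurd ((quant_le_iff Q r hy.1 hy.2).1 hc) (not_le.2 hr.1)
        exact h2 (he ▸ h1)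
      · refine ⟨hy, fun he => ?_⟩
        have h1 : quant Q y ≤ (r:ℝ) := (quant_le_iff Q r hy.1 hy.2).2 hr.2
        have h2 : ¬ quant P y ≤ (r:ℝ) := fun hc =>
          absurd ((quant_le_iff P r hy.1 hy.2).1 hc) (not_le.2 hr.1)
        exact h2 (he ▸ h1)
  rw [hset]
  exact MeasurableSet.iUnion fun r =>
    ((measurableSet_Ioc.union measurableSet_Ioc).inter measurableSet_Ioo)

lemma lintegral_quant_comp_sq_lt_top {h h' : ℝ → ℝ} {C : ℝ} (hC : 0 ≤ C)
    (hmeas : Measurable h')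
    (hbd : ∀ᵐ y ∂(volume.restrict (Icc (0:ℝ) 1)), 0 ≤ h' y ∧ h' y ≤ C)
    (hrep : ∀ x ∈ Icc (0:ℝ) 1, h x = ∫ y in Ioc (0:ℝ) x, h' y) (hone : h 1 = 1)
    (R Rh : Measure ℝ) [IsProbabilityMeasure R] [IsProbabilityMeasure Rh]
    (hm : ∫⁻ x, ENNReal.ofReal (x ^ 2) ∂(R) < ⊤)
    (hcdf : ∀ x, distFun Rh x = h (distFun R x)) :
    ∫⁻ t in Ioo (0:ℝ) 1, ENNReal.ofReal (quant Rh t ^ 2) < ⊤ := by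
  have hmono := rep_monoOn hmeas hbd hrep
  have hcont := rep_contOn hC hmeas hbd hrep
  have hzero := rep_zero (h := h) hrep
  set bR := (Ioo (0:ℝ) 1).indicator (quant R) with hbR
  have hcomp : ∀ t ∈ Ioo (0:ℝ) 1, quant Rh t = bR (tauBar h t) := by
    intro t ht
    rw [tauBar_eq ht.2.le, hbR,
      Set.indicator_of_mem (funInv_mem_Ioo hmono hcont hzero hone ht.1 ht.2)]
    exact quant_comp R Rh hmono hcont hone hcdf ht.2.le
  have hg : Measurable fun x : ℝ => ENNReal.ofReal (bR x ^ 2) :=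
    ((measurable_quantInd R).pow_const 2).ennreal_ofReal
  have hcongr : ∫⁻ t in Ioo (0:ℝ) 1, ENNReal.ofReal (quant Rh t ^ 2)
      = ∫⁻ t in Ioo (0:ℝ) 1, ENNReal.ofReal (bR (tauBar h t) ^ 2) := by
    refine setLIntegral_congr_fun measurableSet_Ioo (fun t ht => ?_)
    rw [hcomp t ht]
  rw [hcongr]
  have hmap := lintegral_map hg (tauBar_measurable (h := h) hone)
    (μ := volume.restrict (Ioo (0:ℝ) 1))
  rw [map_tauBar_eq hC hmeas hbd hrep hone] at hmap
  rw [← hmap]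
  rw [lintegral_withDensity_eq_lintegral_mul _
    ((hmeas.ennreal_ofReal).indicator measurableSet_Ioc) hg]
  have hmul : ((Ioc (0:ℝ) 1).indicator fun y => ENNReal.ofReal (h' y))
        * (fun x => ENNReal.ofReal (bR x ^ 2))
      = (Ioc (0:ℝ) 1).indicator
        (fun y => ENNReal.ofReal (h' y) * ENNReal.ofReal (bR y ^ 2)) := by
    ext y
    by_cases hy : y ∈ Ioc (0:ℝ) 1
    · simp [Set.indicator_of_mem hy]
    · simp [Set.indicator_of_notMem hy]
  rw [hmul, lintegral_indicator measurableSet_Ioc]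
  have hbound : ∫⁻ y in Ioc (0:ℝ) 1, ENNReal.ofReal (h' y) * ENNReal.ofReal (bR y ^ 2)
      ≤ ∫⁻ y in Ioc (0:ℝ) 1, ENNReal.ofReal C * ENNReal.ofReal (bR y ^ 2) := by
    refine lintegral_mono_ae ?_
    filter_upwards [ae_restrict_of_ae_restrict_of_subset Ioc_subset_Icc_self hbd] with y hy
    exact mul_le_mul_left (ENNReal.ofReal_le_ofReal hy.2) _
  refine lt_of_le_of_lt hbound ?_
  rw [lintegral_const_mul _ hg]
  refine ENNReal.mul_lt_top ENNReal.ofReal_lt_top ?_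
  rw [← Measure.restrict_congr_set Ioo_ae_eq_Ioc]
  exact lintegral_quantInd_sq_lt_top R hm

lemma forward_dir {α : ℝ} (hα1 : α < 1)
    (P Q : Measure ℝ) [IsProbabilityMeasure P] [IsProbabilityMeasure Q]
    (hmP : ∫⁻ x, ENNReal.ofReal (x ^ 2) ∂P < ⊤) (hmQ : ∫⁻ x, ENNReal.ofReal (x ^ 2) ∂Q < ⊤)
    {h h' : ℝ → ℝ}
    (hmeas : Measurable h')
    (hbd : ∀ᵐ y ∂(volume.restrict (Icc (0:ℝ) 1)), 0 ≤ h' y ∧ h' y ≤ 1/(1-α))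
    (hrep : ∀ x ∈ Icc (0:ℝ) 1, h x = ∫ y in Ioc (0:ℝ) x, h' y) (hone : h 1 = 1)
    (Ph Qh : Measure ℝ) [IsProbabilityMeasure Ph] [IsProbabilityMeasure Qh]
    (hcdfP : ∀ x, distFun Ph x = h (distFun P x))
    (hcdfQ : ∀ x, distFun Qh x = h (distFun Q x))
    (hW : Real.sqrt (∫ t in Ioo (0:ℝ) 1, (quant Ph t - quant Qh t) ^ 2) = 0) :
    volume {y ∈ Ioo (0:ℝ) 1 | quant P y ≠ quant Q y} ≤ ENNReal.ofReal α := by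
  set C := 1/(1-α) with hCdef
  have h1α : 0 < 1 - α := by linarith
  have hC : 0 ≤ C := le_of_lt (by positivity)
  have hmono := rep_monoOn hmeas hbd hrep
  have hcont := rep_contOn hC hmeas hbd hrep
  have hzero := rep_zero (h := h) hrep
  set D := {y ∈ Ioo (0:ℝ) 1 | quant P y ≠ quant Q y} with hD
  have hDmeas : MeasurableSet D := measurableSet_D P Q
  have hDIoo : D ⊆ Ioo 0 1 := fun y hy => hy.1
  have hDIoc : D ⊆ Ioc 0 1 := hDIoo.trans Ioo_subset_Ioc_self
  have hcompP : ∀ t ∈ Ioo (0:ℝ) 1, quant Ph t = quant P (tauBar h t) := fun t ht => by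
    rw [tauBar_eq ht.2.le]; exact quant_comp P Ph hmono hcont hone hcdfP ht.2.le
  have hcompQ : ∀ t ∈ Ioo (0:ℝ) 1, quant Qh t = quant Q (tauBar h t) := fun t ht => by
    rw [tauBar_eq ht.2.le]; exact quant_comp Q Qh hmono hcont hone hcdfQ ht.2.le
  set f := fun t => (quant Ph t - quant Qh t) ^ 2 with hf
  set bP := (Ioo (0:ℝ) 1).indicator (quant Ph) with hbP
  set bQ := (Ioo (0:ℝ) 1).indicator (quant Qh) with hbQ
  have hfae : f =ᵐ[volume.restrict (Ioo (0:ℝ) 1)] fun t => (bP t - bQ t) ^ 2 := by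
    filter_upwards [ae_restrict_mem measurableSet_Ioo] with t ht
    rw [hbP, hbQ]
    simp only [Set.indicator_of_mem ht, hf]
  have hKP : ∫⁻ t in Ioo (0:ℝ) 1, ENNReal.ofReal (bP t ^ 2) < ⊤ := by
    refine lt_of_le_of_lt (le_of_eq ?_)
      (lintegral_quant_comp_sq_lt_top hC hmeas hbd hrep hone P Ph hmP hcdfP)
    refine setLIntegral_congr_fun measurableSet_Ioo (fun t ht => ?_)
    rw [hbP, Set.indicator_of_mem ht]
  have hKQ : ∫⁻ t in Ioo (0:ℝ) 1, ENNReal.ofReal (bQ t ^ 2) < ⊤ := by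
    refine lt_of_le_of_lt (le_of_eq ?_)
      (lintegral_quant_comp_sq_lt_top hC hmeas hbd hrep hone Q Qh hmQ hcdfQ)
    refine setLIntegral_congr_fun measurableSet_Ioo (fun t ht => ?_)
    rw [hbQ, Set.indicator_of_mem ht]
  have hmP2 : Measurable fun t => ENNReal.ofReal (bP t ^ 2) :=
    ((measurable_quantInd Ph).pow_const 2).ennreal_ofReal
  have hmQ2 : Measurable fun t => ENNReal.ofReal (bQ t ^ 2) :=
    ((measurable_quantInd Qh).pow_const 2).ennreal_ofReal
  have hInt : IntegrableOn f (Ioo (0:ℝ) 1) := by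
    have hsm : AEStronglyMeasurable f (volume.restrict (Ioo (0:ℝ) 1)) :=
      ((((measurable_quantInd Ph).sub (measurable_quantInd Qh)).pow_const
        2).aestronglyMeasurable).congr hfae.symm
    refine ⟨hsm, ?_⟩
    rw [hasFiniteIntegral_iff_norm]
    calc ∫⁻ t, ENNReal.ofReal ‖f t‖ ∂(volume.restrict (Ioo (0:ℝ) 1))
          ≤ ∫⁻ t, (2 * ENNReal.ofReal (bP t ^ 2) + 2 * ENNReal.ofReal (bQ t ^ 2))
            ∂(volume.restrict (Ioo (0:ℝ) 1)) := by
            refine lintegral_mono_ae ?_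
            filter_upwards [ae_restrict_mem measurableSet_Ioo] with t ht
            have e1 : f t = (bP t - bQ t) ^ 2 := by
              rw [hbP, hbQ]; simp only [Set.indicator_of_mem ht, hf]
            have e2 : ‖f t‖ = (bP t - bQ t) ^ 2 := by
              rw [Real.norm_eq_abs, e1, abs_of_nonneg (sq_nonneg _)]
            rw [e2]
            have key : (bP t - bQ t) ^ 2 ≤ 2 * bP t ^ 2 + 2 * bQ t ^ 2 := by
              nlinarith [sq_nonneg (bP t + bQ t)]
            calc ENNReal.ofReal ((bP t - bQ t) ^ 2)
                ≤ ENNReal.ofReal (2 * bP t ^ 2 + 2 * bQ t ^ 2) :=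
                  ENNReal.ofReal_le_ofReal key
            _ = 2 * ENNReal.ofReal (bP t ^ 2) + 2 * ENNReal.ofReal (bQ t ^ 2) := by
                  rw [ENNReal.ofReal_add (by positivity) (by positivity),
                    ENNReal.ofReal_mul (by norm_num), ENNReal.ofReal_mul (by norm_num)]
                  norm_num
      _ = 2 * (∫⁻ t in Ioo (0:ℝ) 1, ENNReal.ofReal (bP t ^ 2))
            + 2 * (∫⁻ t in Ioo (0:ℝ) 1, ENNReal.ofReal (bQ t ^ 2)) := by
            rw [lintegral_add_left (hmP2.const_mul 2), lintegral_const_mul 2 hmP2,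
              lintegral_const_mul 2 hmQ2]
      _ < ⊤ := by
            refine ENNReal.add_lt_top.2 ⟨?_, ?_⟩
            · exact ENNReal.mul_lt_top (by norm_num) hKP
            · exact ENNReal.mul_lt_top (by norm_num) hKQ
  have hint0 : ∫ t in Ioo (0:ℝ) 1, f t = 0 :=
    le_antisymm (Real.sqrt_eq_zero'.1 hW) (integral_nonneg fun t => sq_nonneg _)
  have hae0 : f =ᵐ[volume.restrict (Ioo (0:ℝ) 1)] 0 :=
    (integral_eq_zero_iff_of_nonneg (fun t => sq_nonneg _) hInt).1 hint0
  have hnull : (volume.restrict (Ioo (0:ℝ) 1)) {t | f t ≠ 0} = 0 := by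
    have := hae0
    rw [Filter.EventuallyEq, ae_iff] at this
    simpa using this
  have hbadnull : volume ({t | tauBar h t ∈ D} ∩ Ioo 0 1) = 0 := by
    have hsub : {t | tauBar h t ∈ D} ∩ Ioo 0 1 ⊆ {t | f t ≠ 0} ∩ Ioo 0 1 := by
      rintro t ⟨htD, ht⟩
      refine ⟨?_, ht⟩
      have hne : quant P (tauBar h t) ≠ quant Q (tauBar h t) := htD.2
      rw [Set.mem_setOf_eq, hf]
      simp only
      rw [hcompP t ht, hcompQ t ht]
      exact pow_ne_zero 2 (sub_ne_zero.2 hne)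
    refine measure_mono_null hsub ?_
    rw [← Measure.restrict_apply' measurableSet_Ioo]
    exact hnull
  have hνD : ∫⁻ y in D, ENNReal.ofReal (h' y) = 0 := by
    have h1 : Measure.map (tauBar h) (volume.restrict (Ioo (0:ℝ) 1)) D = 0 := by
      rw [Measure.map_apply (tauBar_measurable hone) hDmeas,
        Measure.restrict_apply' measurableSet_Ioo]
      exact hbadnull
    rw [map_tauBar_eq hC hmeas hbd hrep hone, withDensity_apply _ hDmeas] at h1
    have h2 : ∫⁻ y in D, ENNReal.ofReal (h' y)
        = ∫⁻ y in D, ((Ioc (0:ℝ) 1).indicator fun y => ENNReal.ofReal (h' y)) y :=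
      setLIntegral_congr_fun hDmeas
        (fun y hy =>
          (Set.indicator_of_mem (hDIoc hy) (fun y => ENNReal.ofReal (h' y))).symm)
    rw [h2]
    exact h1
  have hIoc1 : volume (Ioc (0:ℝ) 1) = 1 := by rw [Real.volume_Ioc]; norm_num
  have hDfin : volume D ≠ ⊤ :=
    (lt_of_le_of_lt (measure_mono hDIoc) (by rw [hIoc1]; exact ENNReal.one_lt_top)).ne
  have hD1 : volume D ≤ 1 := hIoc1 ▸ measure_mono hDIoc
  have hsplit : ENNReal.ofReal 1 = ∫⁻ y in Ioc (0:ℝ) 1 \ D, ENNReal.ofReal (h' y) := by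
    have e0 : ENNReal.ofReal 1 = ∫⁻ y in Ioc (0:ℝ) 1, ENNReal.ofReal (h' y) := by
      rw [lintegral_ofReal_h'_Ioc hmeas hbd hrep (right_mem_Icc.2 zero_le_one), hone]
    calc ENNReal.ofReal 1
        = ∫⁻ y in (Ioc (0:ℝ) 1 \ D) ∪ D, ENNReal.ofReal (h' y) := by
          rw [Set.diff_union_of_subset hDIoc]; exact e0
    _ = _ := by rw [lintegral_union hDmeas disjoint_sdiff_self_left, hνD, add_zero]
  have hbound2 : ∫⁻ y in Ioc (0:ℝ) 1 \ D, ENNReal.ofReal (h' y)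
      ≤ ENNReal.ofReal C * (1 - volume D) := by
    calc ∫⁻ y in Ioc (0:ℝ) 1 \ D, ENNReal.ofReal (h' y)
        ≤ ∫⁻ _ in Ioc (0:ℝ) 1 \ D, ENNReal.ofReal C := by
          refine lintegral_mono_ae ?_
          filter_upwards [ae_restrict_of_ae_restrict_of_subset
            ((Set.diff_subset).trans Ioc_subset_Icc_self) hbd] with y hy
          exact ENNReal.ofReal_le_ofReal hy.2
    _ = ENNReal.ofReal C * volume (Ioc (0:ℝ) 1 \ D) := setLIntegral_const _ _
    _ = ENNReal.ofReal C * (1 - volume D) := by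
          rw [measure_diff hDIoc hDmeas.nullMeasurableSet hDfin, hIoc1]
  have hfinal : ENNReal.ofReal 1 ≤ ENNReal.ofReal C * (1 - volume D) :=
    hsplit ▸ hbound2
  have hne : ENNReal.ofReal C * (1 - volume D) ≠ ⊤ :=
    ENNReal.mul_ne_top ENNReal.ofReal_ne_top
      (ne_top_of_le_ne_top ENNReal.one_ne_top tsub_le_self)
  have htr := ENNReal.toReal_mono hne hfinal
  rw [ENNReal.toReal_ofReal (by norm_num : (0:ℝ) ≤ 1), ENNReal.toReal_mul,
    ENNReal.toReal_ofReal hC, ENNReal.toReal_sub_of_le hD1 ENNReal.one_ne_top,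
    ENNReal.toReal_one] at htr
  set u := (volume D).toReal with hu
  have huα : u ≤ α := by
    rw [hCdef, div_mul_eq_mul_div, one_mul, le_div_iff₀ h1α] at htr
    linarith
  rw [← ENNReal.ofReal_toReal hDfin]
  exact ENNReal.ofReal_le_ofReal huα

def stComp (h : ℝ → ℝ) (R : Measure ℝ) (hmono : MonotoneOn h (Icc 0 1))
    (hcont : ContinuousOn h (Icc 0 1)) : StieltjesFunction ℝ where
  toFun := fun x => h (ProbabilityTheory.cdf R x)
  mono' := fun x y hxy => hmono ⟨cdf_nonneg R x, cdf_le_one R x⟩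
    ⟨cdf_nonneg R y, cdf_le_one R y⟩ (monotone_cdf R hxy)
  right_continuous' := fun x => by
    have h1 : Tendsto (ProbabilityTheory.cdf R) (𝓝[Ici x] x)
        (𝓝[Icc (0:ℝ) 1] (ProbabilityTheory.cdf R x)) :=
      tendsto_nhdsWithin_iff.2 ⟨(ProbabilityTheory.cdf R).right_continuous x,
        Filter.Eventually.of_forall fun y => ⟨cdf_nonneg R y, cdf_le_one R y⟩⟩
    exact Filter.Tendsto.comp (hcont _ ⟨cdf_nonneg R x, cdf_le_one R x⟩) h1

lemma stComp_tendsto_atBot {h : ℝ → ℝ} (R : Measure ℝ) (hmono : MonotoneOn h (Icc 0 1))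
    (hcont : ContinuousOn h (Icc 0 1)) (hzero : h 0 = 0) :
    Tendsto (stComp h R hmono hcont) atBot (𝓝 0) := by
  have h1 : Tendsto (ProbabilityTheory.cdf R) atBot (𝓝[Icc (0:ℝ) 1] 0) :=
    tendsto_nhdsWithin_iff.2 ⟨tendsto_cdf_atBot R,
      Filter.Eventually.of_forall fun y => ⟨cdf_nonneg R y, cdf_le_one R y⟩⟩
  have h2 := Filter.Tendsto.comp (hcont 0 ⟨le_refl 0, zero_le_one⟩) h1
  rwa [hzero] at h2

lemma stComp_tendsto_atTop {h : ℝ → ℝ} (R : Measure ℝ) (hmono : MonotoneOn h (Icc 0 1))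
    (hcont : ContinuousOn h (Icc 0 1)) (hone : h 1 = 1) :
    Tendsto (stComp h R hmono hcont) atTop (𝓝 1) := by
  have h1 : Tendsto (ProbabilityTheory.cdf R) atTop (𝓝[Icc (0:ℝ) 1] 1) :=
    tendsto_nhdsWithin_iff.2 ⟨tendsto_cdf_atTop R,
      Filter.Eventually.of_forall fun y => ⟨cdf_nonneg R y, cdf_le_one R y⟩⟩
  have h2 := Filter.Tendsto.comp (hcont 1 ⟨zero_le_one, le_refl 1⟩) h1
  rwa [hone] at h2

lemma stComp_isProb {h : ℝ → ℝ} (R : Measure ℝ) (hmono : MonotoneOn h (Icc 0 1))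
    (hcont : ContinuousOn h (Icc 0 1)) (hzero : h 0 = 0) (hone : h 1 = 1) :
    IsProbabilityMeasure (stComp h R hmono hcont).measure := by
  constructor
  rw [StieltjesFunction.measure_univ _ (stComp_tendsto_atBot R hmono hcont hzero)
    (stComp_tendsto_atTop R hmono hcont hone)]
  norm_num

lemma stComp_distFun {h : ℝ → ℝ} (R : Measure ℝ) [IsProbabilityMeasure R]
    (hmono : MonotoneOn h (Icc 0 1)) (hcont : ContinuousOn h (Icc 0 1))
    (hzero : h 0 = 0) (hone : h 1 = 1)
    (hnn : ∀ y ∈ Icc (0:ℝ) 1, h y ∈ Icc (0:ℝ) 1) (x : ℝ) :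
    distFun (stComp h R hmono hcont).measure x = h (distFun R x) := by
  rw [distFun, StieltjesFunction.measure_Iic _ (stComp_tendsto_atBot R hmono hcont hzero),
    sub_zero]
  have : (stComp h R hmono hcont) x = h (ProbabilityTheory.cdf R x) := rfl
  rw [this, ENNReal.toReal_ofReal
    (hnn _ ⟨cdf_nonneg R x, cdf_le_one R x⟩).1, distFun_eq_cdf]

lemma backward_exists {α : ℝ} (hα0 : 0 ≤ α) (hα1 : α < 1)
    (P Q : Measure ℝ) [IsProbabilityMeasure P] [IsProbabilityMeasure Q]
    (hD : volume {y ∈ Ioo (0:ℝ) 1 | quant P y ≠ quant Q y} ≤ ENNReal.ofReal α) :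
    ∃ h h' : ℝ → ℝ, (Measurable h' ∧
      (∀ᵐ y ∂(volume.restrict (Icc (0:ℝ) 1)), 0 ≤ h' y ∧ h' y ≤ 1 / (1 - α)) ∧
      (∀ x ∈ Icc (0:ℝ) 1, h x = ∫ y in Ioc (0:ℝ) x, h' y) ∧ h 1 = 1) ∧
    ∃ Ph Qh : Measure ℝ, IsProbabilityMeasure Ph ∧ IsProbabilityMeasure Qh ∧
      (∀ x, distFun Ph x = h (distFun P x)) ∧ (∀ x, distFun Qh x = h (distFun Q x)) ∧
      Real.sqrt (∫ t in Ioo (0:ℝ) 1, (quant Ph t - quant Qh t) ^ 2) = 0 := by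
  set D := {y ∈ Ioo (0:ℝ) 1 | quant P y ≠ quant Q y} with hDdef
  have hDmeas : MeasurableSet D := measurableSet_D P Q
  have hDIoo : D ⊆ Ioo 0 1 := fun y hy => hy.1
  have hIoo1 : volume (Ioo (0:ℝ) 1) = 1 := by rw [Real.volume_Ioo]; norm_num
  have hDfin : volume D ≠ ⊤ :=
    (lt_of_le_of_lt (measure_mono hDIoo) (by rw [hIoo1]; exact ENNReal.one_lt_top)).ne
  have hD1 : volume D ≤ 1 := hIoo1 ▸ measure_mono hDIoo
  set β := (volume D).toReal with hβ
  have hβ0 : 0 ≤ β := ENNReal.toReal_nonneg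
  have hβα : β ≤ α := by
    have := ENNReal.toReal_mono ENNReal.ofReal_ne_top hD
    rwa [ENNReal.toReal_ofReal hα0] at this
  have h1β : 0 < 1 - β := by linarith
  set c := 1 / (1 - β) with hc
  have hc0 : 0 < c := by positivity
  set h' : ℝ → ℝ := (Ioo (0:ℝ) 1 \ D).indicator (fun _ => c) with hh'
  set h : ℝ → ℝ := fun x => ∫ y in Ioc (0:ℝ) x, h' y with hh
  have hmeas : Measurable h' := measurable_const.indicator (measurableSet_Ioo.diff hDmeas)
  have hbd' : ∀ y, 0 ≤ h' y ∧ h' y ≤ c := by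
    intro y
    constructor
    · exact Set.indicator_nonneg (fun _ _ => hc0.le) y
    · by_cases hy : y ∈ Ioo (0:ℝ) 1 \ D
      · rw [hh', Set.indicator_of_mem hy]
      · rw [hh', Set.indicator_of_notMem hy]; exact hc0.le
  have hcα : c ≤ 1 / (1 - α) := by
    rw [hc]
    exact one_div_le_one_div_of_le (by linarith) (by linarith)
  have hbd : ∀ᵐ y ∂(volume.restrict (Icc (0:ℝ) 1)), 0 ≤ h' y ∧ h' y ≤ c := ae_of_all _ hbd'
  have hrep : ∀ x ∈ Icc (0:ℝ) 1, h x = ∫ y in Ioc (0:ℝ) x, h' y := fun x _ => rfl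
  have hone : h 1 = 1 := by
    have e1 : h 1 = ∫ y in (Ioo (0:ℝ) 1 \ D) ∩ Ioc 0 1, c := by
      rw [hh]
      simp only
      rw [hh', integral_indicator (measurableSet_Ioo.diff hDmeas),
        Measure.restrict_restrict (measurableSet_Ioo.diff hDmeas)]
    have e2 : (Ioo (0:ℝ) 1 \ D) ∩ Ioc 0 1 = Ioo (0:ℝ) 1 \ D :=
      Set.inter_eq_left.2 ((Set.diff_subset).trans Ioo_subset_Ioc_self)
    have e3 : volume (Ioo (0:ℝ) 1 \ D) = 1 - volume D := by
      rw [measure_diff hDIoo hDmeas.nullMeasurableSet hDfin, hIoo1]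
    rw [e1, e2, setIntegral_const, measureReal_def, e3, ENNReal.toReal_sub_of_le hD1 ENNReal.one_ne_top,
      ENNReal.toReal_one, smul_eq_mul, ← hβ, hc, mul_one_div, div_self h1β.ne']
  have hmono := rep_monoOn hmeas hbd hrep
  have hcont := rep_contOn hc0.le hmeas hbd hrep
  have hzero := rep_zero (h := h) hrep
  have hnn : ∀ y ∈ Icc (0:ℝ) 1, h y ∈ Icc (0:ℝ) 1 := fun y hy =>
    rep_mem_Icc hmeas hbd hrep hone hy
  refine ⟨h, h', ⟨hmeas, ae_of_all _ fun y => ⟨(hbd' y).1, le_trans (hbd' y).2 hcα⟩,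
    hrep, hone⟩, ?_⟩
  refine ⟨(stComp h P hmono hcont).measure, (stComp h Q hmono hcont).measure,
    stComp_isProb P hmono hcont hzero hone, stComp_isProb Q hmono hcont hzero hone,
    stComp_distFun P hmono hcont hzero hone hnn, stComp_distFun Q hmono hcont hzero hone hnn,
    ?_⟩
  set Ph := (stComp h P hmono hcont).measure with hPhdef
  set Qh := (stComp h Q hmono hcont).measure with hQhdef
  have : IsProbabilityMeasure Ph := stComp_isProb P hmono hcont hzero hone
  have : IsProbabilityMeasure Qh := stComp_isProb Q hmono hcont hzero hone
  have hcompP : ∀ t ∈ Ioo (0:ℝ) 1, quant Ph t = quant P (tauBar h t) := fun t ht => by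
    rw [tauBar_eq ht.2.le]
    exact quant_comp P Ph hmono hcont hone
      (stComp_distFun P hmono hcont hzero hone hnn) ht.2.le
  have hcompQ : ∀ t ∈ Ioo (0:ℝ) 1, quant Qh t = quant Q (tauBar h t) := fun t ht => by
    rw [tauBar_eq ht.2.le]
    exact quant_comp Q Qh hmono hcont hone
      (stComp_distFun Q hmono hcont hzero hone hnn) ht.2.le
  have hbad : volume (tauBar h ⁻¹' D ∩ Ioo 0 1) = 0 := by
    have h1 := map_tauBar_eq hc0.le hmeas hbd hrep hone
    have h2 : Measure.map (tauBar h) (volume.restrict (Ioo (0:ℝ) 1)) D = 0 := by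
      rw [h1, withDensity_apply _ hDmeas]
      have hz : ∀ y ∈ D, ((Ioc (0:ℝ) 1).indicator fun y => ENNReal.ofReal (h' y)) y = 0 := by
        intro y hy
        rw [Set.indicator_of_mem (Ioo_subset_Ioc_self (hDIoo hy))]
        rw [hh', Set.indicator_of_notMem (fun hcon => hcon.2 hy)]
        simp
      rw [setLIntegral_congr_fun hDmeas hz, lintegral_zero]
    rwa [Measure.map_apply (tauBar_measurable hone) hDmeas,
      Measure.restrict_apply' measurableSet_Ioo] at h2
  have haez : (fun t => (quant Ph t - quant Qh t) ^ 2)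
      =ᵐ[volume.restrict (Ioo (0:ℝ) 1)] 0 := by
    rw [Filter.EventuallyEq, ae_iff, Measure.restrict_apply' measurableSet_Ioo]
    refine measure_mono_null ?_ hbad
    rintro t ⟨htne, ht⟩
    simp only [Set.mem_setOf_eq, Pi.zero_apply] at htne
    refine ⟨?_, ht⟩
    have h1 : quant Ph t ≠ quant Qh t := by
      intro he
      exact htne (by rw [he, sub_self]; norm_num)
    rw [hcompP t ht, hcompQ t ht] at h1
    have hτm : tauBar h t ∈ Ioo (0:ℝ) 1 := by
      rw [tauBar_eq ht.2.le]
      exact funInv_mem_Ioo hmono hcont hzero hone ht.1 ht.2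
    exact ⟨hτm, h1⟩
  have hint0 : ∫ t in Ioo (0:ℝ) 1, (quant Ph t - quant Qh t) ^ 2 = 0 :=
    integral_eq_zero_of_ae haez
  rw [hint0, Real.sqrt_zero]

end CTAux

end

/-- The common trimming distance `T_α(P,Q) = min_{h ∈ C_α} W₂(P_h,Q_h)`
vanishes (i.e. the minimum is attained at value `0`) iff the set of `y ∈ (0,1)` where the
quantile functions of `P` and `Q` differ has Lebesgue measure at most `α`. -/
theorem common_trimming_distance_eq_zero_iff
    (α : ℝ) (hα0 : 0 ≤ α) (hα1 : α < 1)
    (P Q : Measure ℝ) (hP : IsProbabilityMeasure P) (hQ : IsProbabilityMeasure Q)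
    (hmP : FiniteSecondMoment P) (hmQ : FiniteSecondMoment Q) :
    (∃ h h' : ℝ → ℝ, IsTrimmingFun α h h' ∧
      ∃ Ph Qh : Measure ℝ, IsProbabilityMeasure Ph ∧ IsProbabilityMeasure Qh ∧
        (∀ x, distFun Ph x = h (distFun P x)) ∧
        (∀ x, distFun Qh x = h (distFun Q x)) ∧
        W2 Ph Qh = 0) ↔
    volume {y ∈ Set.Ioo (0 : ℝ) 1 | quant P y ≠ quant Q y} ≤ ENNReal.ofReal α := by
  constructor
  · rintro ⟨h, h', ⟨hmeas, hbd, hrep, hone⟩, Ph, Qh, hPh, hQh, hcdfP, hcdfQ, hW⟩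
    haveI := hPh; haveI := hQh
    rw [W2] at hW
    exact CTAux.forward_dir hα1 P Q hmP hmQ hmeas hbd hrep hone Ph Qh hcdfP hcdfQ hW
  · intro hD
    obtain ⟨h, h', ⟨hmeas, hbd, hrep, hone⟩, Ph, Qh, h1, h2, h3, h4, h5⟩ :=
      CTAux.backward_exists hα0 hα1 P Q hD
    refine ⟨h, h', ⟨hmeas, hbd, hrep, hone⟩, Ph, Qh, h1, h2, h3, h4, ?_⟩
    rw [W2]
    exact h5

end
end

section
/- Let α ∈ [0,1) and let P, Q ∈ F₂. Then the common trimming distance T_α(P,Q) := min_{h ∈ C_α} W₂(P_h, Q_h) equals zero if and only if there exist a probability space (Ω, F, ℙ), a random variable Z on it, and non-decreasing left-continuous functions φ₁, φ₂: ℝ → ℝ such that φ₁(Z) has law P, φ₂(Z) has law Q, and ℙ(φ₁(Z) ≠ φ₂(Z)) ≤ α. -/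
open MeasureTheory ProbabilityTheory Filter Topology Asymptotics
open scoped ENNReal NNReal

noncomputable section

set_option linter.unusedSectionVars false
set_option linter.unusedVariables false

open Set

section Aux

variable (P : Measure ℝ) [IsProbabilityMeasure P]

lemma distFun_eq_cdf (x : ℝ) : distFun P x = cdf P x := (cdf_eq_real P x).symm

lemma distFun_nonneg (x : ℝ) : 0 ≤ distFun P x := ENNReal.toReal_nonneg

lemma distFun_le_one (x : ℝ) : distFun P x ≤ 1 := by
  rw [distFun_eq_cdf]; exact cdf_le_one P x

lemma distFun_mono : Monotone (distFun P) := by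
  intro x y hxy
  exact ENNReal.toReal_mono (measure_ne_top _ _) (measure_mono (Iic_subset_Iic.2 hxy))

lemma ofReal_distFun (x : ℝ) : ENNReal.ofReal (distFun P x) = P (Iic x) := by
  rw [distFun_eq_cdf]; exact ofReal_cdf P x

lemma quantSet_nonempty {t : ℝ} (ht1 : t < 1) : {x : ℝ | t ≤ distFun P x}.Nonempty := by
  have := (tendsto_cdf_atTop P).eventually (eventually_ge_nhds ht1)
  obtain ⟨x, hx⟩ := this.exists
  exact ⟨x, by rwa [mem_setOf_eq, distFun_eq_cdf]⟩

lemma quantSet_bddBelow {t : ℝ} (ht0 : 0 < t) : BddBelow {x : ℝ | t ≤ distFun P x} := by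
  have := (tendsto_cdf_atBot P).eventually (eventually_lt_nhds ht0)
  obtain ⟨x₀, hx₀⟩ := this.exists
  refine ⟨x₀, fun x hx => ?_⟩
  by_contra hlt
  push_neg at hlt
  have h2 : distFun P x ≤ distFun P x₀ := distFun_mono P hlt.le
  have h3 : distFun P x₀ < t := by rw [distFun_eq_cdf]; exact hx₀
  exact absurd (le_trans hx h2) (not_le.2 h3)

lemma quant_le_iff {t x : ℝ} (ht0 : 0 < t) (ht1 : t < 1) :
    quant P t ≤ x ↔ t ≤ distFun P x := by
  constructor
  · intro hq
    have hkey : t ≤ distFun P (quant P t) := by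
      have hne := quantSet_nonempty P ht1
      have hbd := quantSet_bddBelow P ht0
      set a := quant P t with ha
      have h1 : ∀ y ∈ Ioi a, t ≤ distFun P y := by
        intro y hy
        obtain ⟨z, hz, hzy⟩ := exists_lt_of_csInf_lt hne hy
        exact le_trans hz (distFun_mono P hzy.le)
      have h2 : Tendsto (cdf P) (𝓝[>] a) (𝓝 (cdf P a)) :=
        ((cdf P).right_continuous a).mono_left (nhdsWithin_mono a Ioi_subset_Ici_self)
      have h3 : ∀ᶠ y in 𝓝[>] a, t ≤ cdf P y := by
        filter_upwards [self_mem_nhdsWithin] with y hy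
        rw [← distFun_eq_cdf]; exact h1 y hy
      rw [distFun_eq_cdf]
      exact ge_of_tendsto h2 h3
    exact le_trans hkey (distFun_mono P hq)
  · intro hx
    exact csInf_le (quantSet_bddBelow P ht0) hx

lemma le_distFun_quant {t : ℝ} (ht0 : 0 < t) (ht1 : t < 1) :
    t ≤ distFun P (quant P t) :=
  (quant_le_iff P ht0 ht1).1 le_rfl

lemma quant_mono {s t : ℝ} (hs0 : 0 < s) (hst : s ≤ t) (ht1 : t < 1) :
    quant P s ≤ quant P t :=
  (quant_le_iff P hs0 (lt_of_le_of_lt hst ht1)).2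
    (le_trans hst (le_distFun_quant P (lt_of_lt_of_le hs0 hst) ht1))

lemma quant_of_nonpos {t : ℝ} (ht : t ≤ 0) : quant P t = 0 := by
  have : {x : ℝ | t ≤ distFun P x} = univ :=
    eq_univ_of_forall fun x => le_trans ht (distFun_nonneg P x)
  rw [quant, this, Real.sInf_of_not_bddBelow not_bddBelow_univ]

lemma quant_of_one_lt {t : ℝ} (ht : 1 < t) : quant P t = 0 := by
  have : {x : ℝ | t ≤ distFun P x} = ∅ := by
    refine eq_empty_iff_forall_notMem.2 fun x hx => ?_
    exact absurd (le_trans hx (distFun_le_one P x)) (not_le.2 ht)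
  rw [quant, this, Real.sInf_empty]

lemma measurable_quant : Measurable (quant P) := by
  apply measurable_of_Iic
  intro c
  have hset : quant P ⁻¹' Iic c =
      (Ioo 0 1 ∩ Iic (distFun P c)) ∪ ((Iic 0 ∪ Ioi 1) ∩ {_t : ℝ | (0:ℝ) ≤ c}) ∪
        ({1} ∩ {_t : ℝ | quant P 1 ≤ c}) := by
    ext t
    simp only [mem_preimage, mem_Iic, mem_union, mem_inter_iff, mem_Ioo, mem_singleton_iff,
      mem_setOf_eq, mem_Ioi]
    rcases le_or_gt t 0 with ht | ht
    · rw [quant_of_nonpos P ht]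
      constructor
      · intro h; exact Or.inl (Or.inr ⟨Or.inl ht, h⟩)
      · rintro ((⟨⟨h1, _⟩, _⟩ | ⟨_, h⟩) | ⟨h1, _⟩)
        · exact absurd ht (not_le.2 h1)
        · exact h
        · rw [h1] at ht; norm_num at ht
    · rcases lt_trichotomy t 1 with ht1 | ht1 | ht1
      · rw [quant_le_iff P ht ht1]
        constructor
        · intro h; exact Or.inl (Or.inl ⟨⟨ht, ht1⟩, h⟩)
        · rintro ((⟨_, h⟩ | ⟨h1, _⟩) | ⟨h1, _⟩)
          · exact h
          · rcases h1 with h1 | h1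
            · exact absurd ht (not_lt.2 h1)
            · exact absurd ht1 (not_lt.2 h1.le)
          · rw [h1] at ht1; exact absurd ht1 (lt_irrefl 1)
      · subst ht1
        constructor
        · intro h; exact Or.inr ⟨rfl, h⟩
        · rintro ((⟨⟨_, h⟩, _⟩ | ⟨h1, _⟩) | ⟨_, h⟩)
          · exact absurd h (lt_irrefl 1)
          · rcases h1 with h1 | h1
            · norm_num at h1
            · exact absurd h1 (lt_irrefl 1)
          · exact h
      · rw [quant_of_one_lt P ht1]
        constructor
        · intro h; exact Or.inl (Or.inr ⟨Or.inr ht1, h⟩)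
        · rintro ((⟨⟨_, h⟩, _⟩ | ⟨_, h⟩) | ⟨h1, _⟩)
          · exact absurd ht1 (not_lt.2 h.le)
          · exact h
          · rw [h1] at ht1; exact absurd ht1 (lt_irrefl 1)
  rw [hset]
  have h1 : MeasurableSet {_t : ℝ | (0:ℝ) ≤ c} := MeasurableSet.const _
  have h2 : MeasurableSet {_t : ℝ | quant P 1 ≤ c} := MeasurableSet.const _
  exact ((measurableSet_Ioo.inter measurableSet_Iic).union
    ((measurableSet_Iic.union measurableSet_Ioi).inter h1)).union
    ((measurableSet_singleton 1).inter h2)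

instance : IsProbabilityMeasure (volume.restrict (Ioo (0:ℝ) 1)) :=
  ⟨by simp [Real.volume_Ioo]⟩

lemma map_quant : Measure.map (quant P) (volume.restrict (Ioo 0 1)) = P := by
  have hm := measurable_quant P
  haveI : IsProbabilityMeasure (Measure.map (quant P) (volume.restrict (Ioo (0:ℝ) 1))) :=
    Measure.isProbabilityMeasure_map hm.aemeasurable
  refine Measure.ext_of_Iic _ P fun c => ?_
  rw [Measure.map_apply hm measurableSet_Iic, Measure.restrict_apply (hm measurableSet_Iic)]
  have hset : quant P ⁻¹' Iic c ∩ Ioo 0 1 = Iic (distFun P c) ∩ Ioo 0 1 := by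
    ext t
    simp only [mem_inter_iff, mem_preimage, mem_Iic, mem_Ioo, and_congr_left_iff]
    intro ht
    rw [quant_le_iff P ht.1 ht.2]
  rw [hset, ← ofReal_distFun P c]
  rcases lt_or_ge (distFun P c) 1 with hc | hc
  · have : Iic (distFun P c) ∩ Ioo 0 1 = Ioc 0 (distFun P c) := by
      ext t
      simp only [mem_inter_iff, mem_Iic, mem_Ioo, mem_Ioc]
      constructor
      · rintro ⟨h1, h2, _⟩; exact ⟨h2, h1⟩
      · rintro ⟨h1, h2⟩; exact ⟨h2, h1, lt_of_le_of_lt h2 hc⟩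
    rw [this, Real.volume_Ioc, sub_zero]
  · have hc1 : distFun P c = 1 := le_antisymm (distFun_le_one P c) hc
    have : Iic (distFun P c) ∩ Ioo 0 1 = Ioo 0 1 := by
      rw [inter_eq_self_of_subset_right]
      intro t ht
      exact le_trans ht.2.le hc
    rw [this, Real.volume_Ioo, hc1]
    norm_num

lemma quant_lcont {t : ℝ} (ht0 : 0 < t) (ht1 : t < 1) :
    ContinuousWithinAt (quant P) (Iio t) t := by
  rw [ContinuousWithinAt]
  refine tendsto_order.2 ⟨fun y hy => ?_, fun y hy => ?_⟩
  · have hex : ∃ s₀, 0 < s₀ ∧ s₀ < t ∧ y < quant P s₀ := by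
      by_contra hcon
      push_neg at hcon
      have hFy : t ≤ distFun P y := by
        by_contra hFy
        push_neg at hFy
        obtain ⟨s, hs1, hs2⟩ := exists_between (max_lt hFy ht0 : max (distFun P y) 0 < t)
        have hs0 : 0 < s := lt_of_le_of_lt (le_max_right _ _) hs1
        have := (quant_le_iff P hs0 (hs2.trans ht1)).1 (hcon s hs0 hs2)
        exact absurd this (not_le.2 (lt_of_le_of_lt (le_max_left _ _) hs1))
      exact absurd ((quant_le_iff P ht0 ht1).2 hFy) (not_le.2 hy)
    obtain ⟨s₀, hs₀0, hs₀t, hs₀y⟩ := hex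
    have hmem : Ioo s₀ t ∈ 𝓝[<] t := Ioo_mem_nhdsLT_of_mem ⟨hs₀t, le_rfl⟩
    filter_upwards [hmem] with s hs
    exact lt_of_lt_of_le hs₀y (quant_mono P hs₀0 hs.1.le (hs.2.trans ht1))
  · have hmem : Ioo 0 t ∈ 𝓝[<] t := Ioo_mem_nhdsLT_of_mem ⟨ht0, le_rfl⟩
    filter_upwards [hmem] with s hs
    exact lt_of_le_of_lt (quant_mono P hs.1 hs.2.le ht1) hy

end Aux
def sigmoid (x : ℝ) : ℝ := 1 / (1 + Real.exp (-x))

lemma sigmoid_mem_Ioo (x : ℝ) : sigmoid x ∈ Ioo (0:ℝ) 1 := by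
  have h : 0 < 1 + Real.exp (-x) := by positivity
  rw [sigmoid]
  constructor
  · positivity
  · rw [div_lt_one h]
    linarith [Real.exp_pos (-x)]

lemma sigmoid_strictMono : StrictMono sigmoid := by
  intro x y hxy
  have hx : 0 < 1 + Real.exp (-x) := by positivity
  have hy : 0 < 1 + Real.exp (-y) := by positivity
  rw [sigmoid, sigmoid, div_lt_div_iff₀ hx hy, one_mul, one_mul]
  have := Real.exp_lt_exp.2 (neg_lt_neg hxy)
  linarith

lemma sigmoid_continuous : Continuous sigmoid := by
  apply Continuous.div continuous_const
  · exact continuous_const.add (Real.continuous_exp.comp continuous_neg)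
  · intro x; positivity

def logit (ω : ℝ) : ℝ := Real.log (ω / (1 - ω))

lemma sigmoid_logit {ω : ℝ} (hω : ω ∈ Ioo (0:ℝ) 1) : sigmoid (logit ω) = ω := by
  have h0 : 0 < ω := hω.1
  have h1 : 0 < 1 - ω := by linarith [hω.2]
  have hpos : 0 < ω / (1 - ω) := div_pos h0 h1
  rw [sigmoid, logit, Real.exp_neg, Real.exp_log hpos]
  rw [inv_div]
  field_simp
  ring

lemma measurable_logit : Measurable logit :=
  Real.measurable_log.comp (measurable_id.div (measurable_const.sub measurable_id))

section Parts

variable (α : ℝ) (P Q : Measure ℝ) [IsProbabilityMeasure P] [IsProbabilityMeasure Q]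

/-- Part B: if the quantile functions differ on a set of measure at most `α`,
then the monotone-transform representation holds. -/
lemma partB (hα0 : 0 ≤ α)
    (hD : volume {t | t ∈ Set.Ioo (0:ℝ) 1 ∧ quant P t ≠ quant Q t} ≤ ENNReal.ofReal α) :
    ∃ (Ω : Type) (_ : MeasurableSpace Ω) (Pr : Measure Ω), IsProbabilityMeasure Pr ∧
      ∃ (Z : Ω → ℝ) (φ₁ φ₂ : ℝ → ℝ), Measurable Z ∧
        Monotone φ₁ ∧ Monotone φ₂ ∧
        (∀ x, ContinuousWithinAt φ₁ (Set.Iio x) x) ∧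
        (∀ x, ContinuousWithinAt φ₂ (Set.Iio x) x) ∧
        Measure.map (fun ω => φ₁ (Z ω)) Pr = P ∧
        Measure.map (fun ω => φ₂ (Z ω)) Pr = Q ∧
        Pr {ω | φ₁ (Z ω) ≠ φ₂ (Z ω)} ≤ ENNReal.ofReal α := by
  classical
  refine ⟨ℝ, inferInstance, volume.restrict (Ioo 0 1), inferInstance,
    logit, (fun x => quant P (sigmoid x)), (fun x => quant Q (sigmoid x)),
    measurable_logit, ?_, ?_, ?_, ?_, ?_, ?_, ?_⟩
  · intro x y hxy
    exact quant_mono P (sigmoid_mem_Ioo x).1 (sigmoid_strictMono.monotone hxy)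
      (sigmoid_mem_Ioo y).2
  · intro x y hxy
    exact quant_mono Q (sigmoid_mem_Ioo x).1 (sigmoid_strictMono.monotone hxy)
      (sigmoid_mem_Ioo y).2
  · intro x
    exact (quant_lcont P (sigmoid_mem_Ioo x).1 (sigmoid_mem_Ioo x).2).comp
      sigmoid_continuous.continuousAt.continuousWithinAt
      (fun y hy => sigmoid_strictMono hy)
  · intro x
    exact (quant_lcont Q (sigmoid_mem_Ioo x).1 (sigmoid_mem_Ioo x).2).comp
      sigmoid_continuous.continuousAt.continuousWithinAt
      (fun y hy => sigmoid_strictMono hy)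
  · have hae : (fun ω => quant P (sigmoid (logit ω))) =ᵐ[volume.restrict (Ioo (0:ℝ) 1)]
        quant P := by
      filter_upwards [self_mem_ae_restrict measurableSet_Ioo] with ω hω
      rw [sigmoid_logit hω]
    rw [Measure.map_congr hae, map_quant P]
  · have hae : (fun ω => quant Q (sigmoid (logit ω))) =ᵐ[volume.restrict (Ioo (0:ℝ) 1)]
        quant Q := by
      filter_upwards [self_mem_ae_restrict measurableSet_Ioo] with ω hω
      rw [sigmoid_logit hω]
    rw [Measure.map_congr hae, map_quant Q]
  · have hmeas : MeasurableSet {ω : ℝ | quant P (sigmoid (logit ω)) ≠ quant Q (sigmoid (logit ω))} := by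
      exact (measurableSet_eq_fun
        ((measurable_quant P).comp (sigmoid_continuous.measurable.comp measurable_logit))
        ((measurable_quant Q).comp (sigmoid_continuous.measurable.comp measurable_logit))).compl
    rw [Measure.restrict_apply hmeas]
    refine le_trans (measure_mono ?_) hD
    rintro ω ⟨hne, hω⟩
    refine ⟨hω, ?_⟩
    have := hne
    simp only [mem_setOf_eq] at this ⊢
    rwa [sigmoid_logit hω] at this

/-- Part C: from the monotone-transform representation, the quantile functions differ
on a set of measure at most `α`. -/
lemma partC (hα0 : 0 ≤ α)
    (hR : ∃ (Ω : Type) (_ : MeasurableSpace Ω) (Pr : Measure Ω), IsProbabilityMeasure Pr ∧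
      ∃ (Z : Ω → ℝ) (φ₁ φ₂ : ℝ → ℝ), Measurable Z ∧
        Monotone φ₁ ∧ Monotone φ₂ ∧
        (∀ x, ContinuousWithinAt φ₁ (Set.Iio x) x) ∧
        (∀ x, ContinuousWithinAt φ₂ (Set.Iio x) x) ∧
        Measure.map (fun ω => φ₁ (Z ω)) Pr = P ∧
        Measure.map (fun ω => φ₂ (Z ω)) Pr = Q ∧
        Pr {ω | φ₁ (Z ω) ≠ φ₂ (Z ω)} ≤ ENNReal.ofReal α) :
    volume {t | t ∈ Set.Ioo (0:ℝ) 1 ∧ quant P t ≠ quant Q t} ≤ ENNReal.ofReal α := by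
  classical
  obtain ⟨Ω', mΩ, Pr, hPr, Z, φ₁, φ₂, hZ, hm1, hm2, _, _, hl1, hl2, hbound⟩ := hR
  set ν : Measure ℝ := Measure.map Z Pr with hν
  haveI : IsProbabilityMeasure ν := Measure.isProbabilityMeasure_map hZ.aemeasurable
  set ψ₁ : ℝ → ℝ := fun t => φ₁ (quant ν t) with hψ₁
  set ψ₂ : ℝ → ℝ := fun t => φ₂ (quant ν t) with hψ₂
  set U : Measure ℝ := volume.restrict (Ioo 0 1) with hU
  have hψ₁m : Measurable ψ₁ := hm1.measurable.comp (measurable_quant ν)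
  have hψ₂m : Measurable ψ₂ := hm2.measurable.comp (measurable_quant ν)
  -- laws of ψ₁, ψ₂ under U
  have hlaw1 : Measure.map ψ₁ U = P := by
    rw [hψ₁, ← Function.comp_def, ← Measure.map_map hm1.measurable (measurable_quant ν),
      map_quant ν, hν, Measure.map_map hm1.measurable hZ, Function.comp_def, hl1]
  have hlaw2 : Measure.map ψ₂ U = Q := by
    rw [hψ₂, ← Function.comp_def, ← Measure.map_map hm2.measurable (measurable_quant ν),
      map_quant ν, hν, Measure.map_map hm2.measurable hZ, Function.comp_def, hl2]
  -- monotonicity of ψᵢ on (0,1)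
  have hψ₁mono : ∀ s t : ℝ, 0 < s → s ≤ t → t < 1 → ψ₁ s ≤ ψ₁ t :=
    fun s t hs hst ht => hm1 (quant_mono ν hs hst ht)
  have hψ₂mono : ∀ s t : ℝ, 0 < s → s ≤ t → t < 1 → ψ₂ s ≤ ψ₂ t :=
    fun s t hs hst ht => hm2 (quant_mono ν hs hst ht)
  -- key fact: a monotone transform with law P agrees with quant P off a countable set
  have key : ∀ (ψ : ℝ → ℝ) (R : Measure ℝ), IsProbabilityMeasure R → Measurable ψ →
      (∀ s t : ℝ, 0 < s → s ≤ t → t < 1 → ψ s ≤ ψ t) → Measure.map ψ U = R →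
      {t | t ∈ Ioo (0:ℝ) 1 ∧ quant R t ≠ ψ t}.Countable := by
    intro ψ R hRp hψm hψmono hψlaw
    haveI := hRp
    -- distFun R x = volume ({s | ψ s ≤ x} ∩ Ioo 0 1)
    have hFx : ∀ x : ℝ, R (Iic x) = volume (ψ ⁻¹' Iic x ∩ Ioo 0 1) := by
      intro x
      rw [← hψlaw, Measure.map_apply hψm measurableSet_Iic, hU,
        Measure.restrict_apply (hψm measurableSet_Iic)]
    -- quant R t ≤ ψ t on (0,1)
    have hle : ∀ t ∈ Ioo (0:ℝ) 1, quant R t ≤ ψ t := by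
      intro t ht
      refine (quant_le_iff R ht.1 ht.2).2 ?_
      have hsub : Ioo 0 t ⊆ ψ ⁻¹' Iic (ψ t) ∩ Ioo 0 1 := by
        intro s hs
        exact ⟨hψmono s t hs.1 hs.2.le ht.2, hs.1, hs.2.trans ht.2⟩
      have h1 : ENNReal.ofReal t ≤ R (Iic (ψ t)) := by
        rw [hFx]
        calc ENNReal.ofReal t = volume (Ioo 0 t) := by rw [Real.volume_Ioo, sub_zero]
        _ ≤ _ := measure_mono hsub
      have : ENNReal.ofReal t ≤ ENNReal.ofReal (distFun R (ψ t)) := by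
        rwa [ofReal_distFun]
      rwa [ENNReal.ofReal_le_ofReal_iff (distFun_nonneg R _)] at this
    -- countability via rationals
    have hsub : {t | t ∈ Ioo (0:ℝ) 1 ∧ quant R t ≠ ψ t} ⊆
        ⋃ q : ℚ, {t | t ∈ Ioo (0:ℝ) 1 ∧ (q:ℝ) < ψ t ∧ ∀ s ∈ Ioo (0:ℝ) t, ψ s ≤ (q:ℝ)} := by
      rintro t ⟨ht, hne⟩
      have hlt : quant R t < ψ t := lt_of_le_of_ne (hle t ht) hne
      obtain ⟨q, hq1, hq2⟩ := exists_rat_btwn hlt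
      refine mem_iUnion.2 ⟨q, ht, hq2, fun s hs => ?_⟩
      -- t ≤ distFun R q
      have htF : t ≤ distFun R q := (quant_le_iff R ht.1 ht.2).1 hq1.le
      by_contra hcon
      push_neg at hcon
      -- then {u ∈ (0,1) | ψ u ≤ q} ⊆ Ioo 0 s, so distFun R q ≤ s < t
      have hsub2 : ψ ⁻¹' Iic (q:ℝ) ∩ Ioo 0 1 ⊆ Ioo 0 s := by
        rintro u ⟨hu1, hu2⟩
        refine ⟨hu2.1, ?_⟩
        by_contra hus
        push_neg at hus
        have := hψmono s u hs.1 hus hu2.2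
        exact absurd (le_trans this hu1) (not_le.2 hcon)
      have h2 : R (Iic (q:ℝ)) ≤ ENNReal.ofReal s := by
        rw [hFx]
        calc volume (ψ ⁻¹' Iic (q:ℝ) ∩ Ioo 0 1) ≤ volume (Ioo 0 s) := measure_mono hsub2
        _ = ENNReal.ofReal s := by rw [Real.volume_Ioo, sub_zero]
      have h3 : distFun R q ≤ s := by
        have hs0 : (0:ℝ) ≤ s := hs.1.le
        rw [← ENNReal.ofReal_le_ofReal_iff hs0, ofReal_distFun]
        exact h2
      have : t ≤ s := le_trans htF h3
      exact absurd this (not_le.2 hs.2)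
    refine Set.Countable.mono hsub ?_
    refine countable_iUnion fun q => Set.Subsingleton.countable ?_
    rintro t₁ ⟨ht₁, hq₁, hall₁⟩ t₂ ⟨ht₂, hq₂, hall₂⟩
    by_contra hne
    rcases lt_or_gt_of_ne hne with hlt | hlt
    · exact absurd hq₁ (not_lt.2 (hall₂ t₁ ⟨ht₁.1, hlt⟩))
    · exact absurd hq₂ (not_lt.2 (hall₁ t₂ ⟨ht₂.1, hlt⟩))
  have hbad1 := key ψ₁ P inferInstance hψ₁m hψ₁mono hlaw1
  have hbad2 := key ψ₂ Q inferInstance hψ₂m hψ₂mono hlaw2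
  -- the ψ-difference set has measure ≤ α
  set B : Set ℝ := {z | φ₁ z ≠ φ₂ z} with hB
  have hBmeas : MeasurableSet B :=
    (measurableSet_eq_fun hm1.measurable hm2.measurable).compl
  have hνB : ν B ≤ ENNReal.ofReal α := by
    rw [hν, Measure.map_apply hZ hBmeas]
    exact hbound
  have hψdiff : volume {t | t ∈ Ioo (0:ℝ) 1 ∧ ψ₁ t ≠ ψ₂ t} ≤ ENNReal.ofReal α := by
    have hseteq : {t | t ∈ Ioo (0:ℝ) 1 ∧ ψ₁ t ≠ ψ₂ t} = quant ν ⁻¹' B ∩ Ioo 0 1 := by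
      ext t; simp only [mem_setOf_eq, mem_inter_iff, mem_preimage, hB, hψ₁, hψ₂]
      tauto
    rw [hseteq, ← Measure.restrict_apply ((measurable_quant ν) hBmeas), ← hU,
      ← Measure.map_apply (measurable_quant ν) hBmeas, hU, map_quant ν]
    exact hνB
  -- combine
  have hsubD : {t | t ∈ Ioo (0:ℝ) 1 ∧ quant P t ≠ quant Q t} ⊆
      {t | t ∈ Ioo (0:ℝ) 1 ∧ ψ₁ t ≠ ψ₂ t} ∪
        ({t | t ∈ Ioo (0:ℝ) 1 ∧ quant P t ≠ ψ₁ t} ∪ {t | t ∈ Ioo (0:ℝ) 1 ∧ quant Q t ≠ ψ₂ t}) := by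
    rintro t ⟨ht, hne⟩
    by_cases h1 : quant P t = ψ₁ t
    · by_cases h2 : quant Q t = ψ₂ t
      · exact Or.inl ⟨ht, by rw [← h1, ← h2]; exact hne⟩
      · exact Or.inr (Or.inr ⟨ht, h2⟩)
    · exact Or.inr (Or.inl ⟨ht, h1⟩)
  calc volume {t | t ∈ Ioo (0:ℝ) 1 ∧ quant P t ≠ quant Q t}
      ≤ volume ({t | t ∈ Ioo (0:ℝ) 1 ∧ ψ₁ t ≠ ψ₂ t} ∪
        ({t | t ∈ Ioo (0:ℝ) 1 ∧ quant P t ≠ ψ₁ t} ∪ {t | t ∈ Ioo (0:ℝ) 1 ∧ quant Q t ≠ ψ₂ t})) :=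
        measure_mono hsubD
    _ ≤ volume {t | t ∈ Ioo (0:ℝ) 1 ∧ ψ₁ t ≠ ψ₂ t} +
        (volume {t | t ∈ Ioo (0:ℝ) 1 ∧ quant P t ≠ ψ₁ t} +
          volume {t | t ∈ Ioo (0:ℝ) 1 ∧ quant Q t ≠ ψ₂ t}) :=
        le_trans (measure_union_le _ _) (by gcongr; exact measure_union_le _ _)
    _ = volume {t | t ∈ Ioo (0:ℝ) 1 ∧ ψ₁ t ≠ ψ₂ t} := by
        rw [hbad1.measure_zero, hbad2.measure_zero, add_zero, add_zero]
    _ ≤ ENNReal.ofReal α := hψdiff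

end Parts

section PartD

variable (α : ℝ) (P Q : Measure ℝ) [IsProbabilityMeasure P] [IsProbabilityMeasure Q]

lemma partD (hα0 : 0 ≤ α) (hα1 : α < 1)
    (hD : volume {t | t ∈ Set.Ioo (0:ℝ) 1 ∧ quant P t ≠ quant Q t} ≤ ENNReal.ofReal α) :
    ∃ h h' : ℝ → ℝ, IsTrimmingFun α h h' ∧
      ∃ Ph Qh : Measure ℝ, IsProbabilityMeasure Ph ∧ IsProbabilityMeasure Qh ∧
        (∀ x, distFun Ph x = h (distFun P x)) ∧
        (∀ x, distFun Qh x = h (distFun Q x)) ∧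
        W2 Ph Qh = 0 := by
  classical
  set D : Set ℝ := {t | t ∈ Ioo (0:ℝ) 1 ∧ quant P t ≠ quant Q t} with hDdef
  have hDmeas : MeasurableSet D := by
    have : D = Ioo 0 1 ∩ {t | quant P t ≠ quant Q t} := by ext t; simp [hDdef]
    rw [this]
    exact measurableSet_Ioo.inter
      (measurableSet_eq_fun (measurable_quant P) (measurable_quant Q)).compl
  set A : Set ℝ := Ioo 0 1 \ D with hAdef
  have hAmeas : MeasurableSet A := measurableSet_Ioo.diff hDmeas
  have hAsub : A ⊆ Ioo 0 1 := diff_subset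
  have hDsub : D ⊆ Ioo 0 1 := fun t ht => ht.1
  have hDne : volume D ≠ ⊤ :=
    (lt_of_le_of_lt hD ENNReal.ofReal_lt_top).ne
  have hvolA : volume A = 1 - volume D := by
    rw [hAdef, measure_diff hDsub hDmeas.nullMeasurableSet hDne, Real.volume_Ioo]
    norm_num
  set a : ℝ := (volume A).toReal with hadef
  have hvolD1 : volume D ≤ 1 := hD.trans (by
    rw [← ENNReal.ofReal_one]; exact ENNReal.ofReal_le_ofReal hα1.le)
  have haval : a = 1 - (volume D).toReal := by
    rw [hadef, hvolA, ENNReal.toReal_sub_of_le hvolD1 ENNReal.one_ne_top]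
    norm_num
  have hDα : (volume D).toReal ≤ α := by
    calc (volume D).toReal ≤ (ENNReal.ofReal α).toReal :=
      ENNReal.toReal_mono ENNReal.ofReal_ne_top hD
    _ = α := ENNReal.toReal_ofReal hα0
  have ha1α : 1 - α ≤ a := by rw [haval]; linarith
  have ha0 : 0 < a := lt_of_lt_of_le (by linarith) ha1α
  have hvolA' : volume A = ENNReal.ofReal a := by
    rw [hadef, ENNReal.ofReal_toReal]
    exact (lt_of_le_of_lt (measure_mono hAsub) (by rw [Real.volume_Ioo]; norm_num)).ne
  -- the trimming function
  set h' : ℝ → ℝ := A.indicator (fun _ => 1 / a) with hh'def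
  set h : ℝ → ℝ := fun x => ∫ y in Ioc (0:ℝ) x, h' y with hhdef
  have hh'meas : Measurable h' := (measurable_const.indicator hAmeas)
  have hint : ∀ s : Set ℝ, MeasurableSet s → ∫ y in s, h' y = (volume (s ∩ A)).toReal * (1 / a) := by
    intro s hs
    rw [hh'def, setIntegral_indicator hAmeas, setIntegral_const, smul_eq_mul]
    rfl
  have hIocA : ∀ x : ℝ, 1 ≤ x → Ioc (0:ℝ) x ∩ A = A := fun x hx =>
    inter_eq_self_of_subset_right (fun t ht => ⟨(hAsub ht).1, le_trans (hAsub ht).2.le hx⟩)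
  have hh1 : h 1 = 1 := by
    rw [hhdef]
    simp only
    rw [hint _ measurableSet_Ioc, hIocA 1 le_rfl, hvolA', ENNReal.toReal_ofReal ha0.le]
    field_simp
  have htrim : IsTrimmingFun α h h' := by
    refine ⟨hh'meas, ?_, fun x _ => rfl, hh1⟩
    refine Filter.Eventually.of_forall fun y => ?_
    constructor
    · rw [hh'def]
      exact Set.indicator_nonneg (fun _ _ => by positivity) y
    · rw [hh'def]
      have h1 : 1 / a ≤ 1 / (1 - α) :=
        one_div_le_one_div_of_le (by linarith) ha1α
      by_cases hy : y ∈ A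
      · rw [Set.indicator_of_mem hy]; exact h1
      · rw [Set.indicator_of_notMem hy]
        have hpos : (0:ℝ) < 1 - α := by linarith
        positivity
  -- the trimmed measure
  set ρ : Measure ℝ := (ENNReal.ofReal a)⁻¹ • volume.restrict A with hρdef
  have hρuniv : ρ univ = 1 := by
    rw [hρdef, Measure.smul_apply, Measure.restrict_apply_univ, hvolA', smul_eq_mul]
    exact ENNReal.inv_mul_cancel (by simpa using ha0) ENNReal.ofReal_ne_top
  haveI hρprob : IsProbabilityMeasure ρ := ⟨hρuniv⟩
  set Ph : Measure ℝ := Measure.map (quant P) ρ with hPhdef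
  haveI hPhprob : IsProbabilityMeasure Ph :=
    Measure.isProbabilityMeasure_map (measurable_quant P).aemeasurable
  -- common value of cdf
  have hAq : ∀ t ∈ A, quant P t = quant Q t := by
    intro t ht
    by_contra hne
    exact ht.2 ⟨ht.1, hne⟩
  have hkey : ∀ (R : Measure ℝ) (_ : IsProbabilityMeasure R),
      (∀ t ∈ A, quant R t = quant P t) →
      ∀ x, distFun Ph x = h (distFun R x) := by
    intro R hRp hRq x
    haveI := hRp
    have hseteq : quant P ⁻¹' Iic x ∩ A = Ioc 0 (distFun R x) ∩ A := by
      ext t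
      simp only [mem_inter_iff, mem_preimage, mem_Iic, mem_Ioc, and_congr_left_iff]
      intro ht
      have ht' := hAsub ht
      rw [← hRq t ht, quant_le_iff R ht'.1 ht'.2]
      constructor
      · intro hle; exact ⟨ht'.1, hle⟩
      · intro hle; exact hle.2
    have hFin : volume (Ioc 0 (distFun R x) ∩ A) ≠ ⊤ :=
      (lt_of_le_of_lt (measure_mono inter_subset_right)
        (by rw [hvolA']; exact ENNReal.ofReal_lt_top)).ne
    rw [distFun, hPhdef, Measure.map_apply (measurable_quant P) measurableSet_Iic, hρdef,
      Measure.smul_apply, Measure.restrict_apply ((measurable_quant P) measurableSet_Iic),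
      hseteq, smul_eq_mul, ENNReal.toReal_mul, ENNReal.toReal_inv,
      ENNReal.toReal_ofReal ha0.le, hhdef]
    simp only
    rw [hint _ measurableSet_Ioc]
    ring
  refine ⟨h, h', htrim, Ph, Ph, hPhprob, hPhprob, hkey P inferInstance (fun t ht => rfl) , hkey Q inferInstance (fun t ht => (hAq t ht).symm), ?_⟩
  rw [W2]
  have : ∀ t : ℝ, (quant Ph t - quant Ph t) ^ 2 = 0 := fun t => by ring
  simp only [this, integral_zero, Real.sqrt_zero]

end PartD

section PartA

variable {α : ℝ} {h h' : ℝ → ℝ}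

lemma isFiniteRestrictIoc : IsFiniteMeasure (volume.restrict (Ioc (0:ℝ) 1)) :=
  ⟨by rw [Measure.restrict_apply_univ, Real.volume_Ioc]; exact ENNReal.ofReal_lt_top⟩

lemma trim_integrableOn (hα1 : α < 1) (ht : IsTrimmingFun α h h') :
    IntegrableOn h' (Ioc 0 1) volume := by
  obtain ⟨hm, hb, _, _⟩ := ht
  have hb' : ∀ᵐ y ∂(volume.restrict (Ioc (0:ℝ) 1)), 0 ≤ h' y ∧ h' y ≤ 1/(1-α) :=
    ae_restrict_of_ae_restrict_of_subset Ioc_subset_Icc_self hb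
  refine ⟨hm.aestronglyMeasurable, ?_⟩
  haveI := isFiniteRestrictIoc
  refine HasFiniteIntegral.of_bounded (C := 1/(1-α)) ?_
  filter_upwards [hb'] with y hy
  rw [Real.norm_eq_abs, abs_of_nonneg hy.1]; exact hy.2

lemma trim_setIntegral_nonneg (hα1 : α < 1) (ht : IsTrimmingFun α h h')
    {s : Set ℝ} (hs : s ⊆ Icc 0 1) : 0 ≤ ∫ y in s, h' y := by
  have hb' : ∀ᵐ y ∂(volume.restrict s), 0 ≤ h' y ∧ h' y ≤ 1/(1-α) :=
    ae_restrict_of_ae_restrict_of_subset hs ht.2.1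
  refine integral_nonneg_of_ae ?_
  filter_upwards [hb'] with y hy using hy.1

lemma trim_setIntegral_le (hα1 : α < 1) (ht : IsTrimmingFun α h h')
    {s : Set ℝ} (hsub : s ⊆ Ioc 0 1) (hs : MeasurableSet s) :
    ∫ y in s, h' y ≤ (1/(1-α)) * (volume s).toReal := by
  have hb' : ∀ᵐ y ∂(volume.restrict s), 0 ≤ h' y ∧ h' y ≤ 1/(1-α) :=
    ae_restrict_of_ae_restrict_of_subset (hsub.trans Ioc_subset_Icc_self) ht.2.1
  have hint : IntegrableOn h' s volume := (trim_integrableOn hα1 ht).mono_set hsub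
  have hintc : Integrable (fun _ : ℝ => 1/(1-α)) (volume.restrict s) := by
    haveI : IsFiniteMeasure (volume.restrict s) :=
      ⟨by rw [Measure.restrict_apply_univ]
          exact lt_of_le_of_lt (measure_mono hsub)
            (by rw [Real.volume_Ioc]; exact ENNReal.ofReal_lt_top)⟩
    exact integrable_const _
  calc ∫ y in s, h' y ≤ ∫ _ in s, 1/(1-α) := by
        refine integral_mono_ae hint hintc ?_
        filter_upwards [hb'] with y hy using hy.2
  _ = (volume s).toReal * (1/(1-α)) := by rw [setIntegral_const, smul_eq_mul]; rfl
  _ = (1/(1-α)) * (volume s).toReal := mul_comm _ _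

lemma trim_diff (hα1 : α < 1) (ht : IsTrimmingFun α h h') {u v : ℝ}
    (hu : 0 ≤ u) (huv : u ≤ v) (hv : v ≤ 1) :
    h v - h u = ∫ y in Ioc u v, h' y := by
  have h1 : h v = ∫ y in Ioc 0 v, h' y := ht.2.2.1 v ⟨hu.trans huv, hv⟩
  have h2 : h u = ∫ y in Ioc 0 u, h' y := ht.2.2.1 u ⟨hu, huv.trans hv⟩
  have hun : Ioc (0:ℝ) u ∪ Ioc u v = Ioc 0 v := Ioc_union_Ioc_eq_Ioc hu huv
  have hint1 : IntegrableOn h' (Ioc 0 u) volume :=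
    (trim_integrableOn hα1 ht).mono_set (Ioc_subset_Ioc le_rfl (huv.trans hv))
  have hint2 : IntegrableOn h' (Ioc u v) volume :=
    (trim_integrableOn hα1 ht).mono_set (Ioc_subset_Ioc hu hv)
  have := setIntegral_union (Set.Ioc_disjoint_Ioc_of_le le_rfl) measurableSet_Ioc hint1 hint2 (f := h')
  rw [hun] at this
  rw [h1, h2, this]
  ring

lemma trim_zero (hα1 : α < 1) (ht : IsTrimmingFun α h h') : h 0 = 0 := by
  have := ht.2.2.1 0 ⟨le_rfl, zero_le_one⟩
  rwa [Ioc_self, Measure.restrict_empty, integral_zero_measure] at this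

lemma trim_lip (hα1 : α < 1) (ht : IsTrimmingFun α h h') {u v : ℝ}
    (hu : 0 ≤ u) (huv : u ≤ v) (hv : v ≤ 1) :
    h v - h u ≤ (1/(1-α)) * (v - u) := by
  rw [trim_diff hα1 ht hu huv hv]
  calc ∫ y in Ioc u v, h' y ≤ (1/(1-α)) * (volume (Ioc u v)).toReal :=
        trim_setIntegral_le hα1 ht (Ioc_subset_Ioc hu hv) measurableSet_Ioc
  _ = (1/(1-α)) * (v - u) := by
        rw [Real.volume_Ioc, ENNReal.toReal_ofReal (by linarith)]

lemma trim_measure_le {P R : Measure ℝ} [IsProbabilityMeasure P] [IsProbabilityMeasure R]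
    (hα0 : 0 ≤ α) (hα1 : α < 1) (ht : IsTrimmingFun α h h')
    (hR : ∀ x, distFun R x = h (distFun P x)) :
    R ≤ ENNReal.ofReal (1/(1-α)) • P := by
  set L : ℝ := 1/(1-α) with hLdef
  have hL0 : 0 < L := by
    rw [hLdef]
    have h1 : (0:ℝ) < 1 - α := by linarith
    positivity
  have hlip' : ∀ a b : ℝ, a ≤ b → distFun R b - distFun R a ≤ L * (distFun P b - distFun P a) := by
    intro a b hab
    rw [hR, hR]
    exact trim_lip hα1 ht (distFun_nonneg P a) (distFun_mono P hab) (distFun_le_one P b)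
  have hRleL : ∀ x, distFun R x ≤ L * distFun P x := by
    intro x
    have := trim_lip hα1 ht (le_refl (0:ℝ)) (distFun_nonneg P x) (distFun_le_one P x)
    rw [trim_zero hα1 ht] at this
    rw [hR]
    linarith
  set S : StieltjesFunction ℝ :=
    { toFun := fun x => L * cdf P x - cdf R x
      mono' := by
        intro a b hab
        have := hlip' a b hab
        rw [distFun_eq_cdf, distFun_eq_cdf, distFun_eq_cdf, distFun_eq_cdf] at this
        simp only
        linarith
      right_continuous' := fun x =>
        (continuousWithinAt_const.mul ((cdf P).right_continuous x)).sub
          ((cdf R).right_continuous x) } with hSdef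
  have hSbot : Tendsto S atBot (𝓝 0) := by
    have : Tendsto (fun x => L * cdf P x - cdf R x) atBot (𝓝 (L * 0 - 0)) :=
      ((tendsto_cdf_atBot P).const_mul L).sub (tendsto_cdf_atBot R)
    simpa using this
  have hStop : Tendsto S atTop (𝓝 (L - 1)) := by
    have : Tendsto (fun x => L * cdf P x - cdf R x) atTop (𝓝 (L * 1 - 1)) :=
      ((tendsto_cdf_atTop P).const_mul L).sub (tendsto_cdf_atTop R)
    simpa using this
  haveI : IsFiniteMeasure S.measure :=
    ⟨by rw [S.measure_univ hSbot hStop]; exact ENNReal.ofReal_lt_top⟩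
  have key : R + S.measure = ENNReal.ofReal L • P := by
    refine Measure.ext_of_Iic _ _ fun x => ?_
    rw [Measure.add_apply, S.measure_Iic hSbot, sub_zero, ← ofReal_distFun R x,
      Measure.smul_apply, smul_eq_mul, ← ofReal_distFun P x, ← ENNReal.ofReal_mul hL0.le]
    have hSx : S x = L * distFun P x - distFun R x := by
      rw [distFun_eq_cdf, distFun_eq_cdf]
    rw [hSx, ← ENNReal.ofReal_add (distFun_nonneg R x) (sub_nonneg.2 (hRleL x)),
      add_sub_cancel]
  calc R ≤ R + S.measure := Measure.le_add_right le_rfl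
  _ = _ := key

end PartA

lemma partA {α : ℝ} (P Q : Measure ℝ) [IsProbabilityMeasure P] [IsProbabilityMeasure Q]
    (hα0 : 0 ≤ α) (hα1 : α < 1) (hmP : FiniteSecondMoment P) (hmQ : FiniteSecondMoment Q)
    (hL : ∃ h h' : ℝ → ℝ, IsTrimmingFun α h h' ∧
      ∃ Ph Qh : Measure ℝ, IsProbabilityMeasure Ph ∧ IsProbabilityMeasure Qh ∧
        (∀ x, distFun Ph x = h (distFun P x)) ∧
        (∀ x, distFun Qh x = h (distFun Q x)) ∧
        W2 Ph Qh = 0) :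
    volume {t | t ∈ Set.Ioo (0:ℝ) 1 ∧ quant P t ≠ quant Q t} ≤ ENNReal.ofReal α := by
  classical
  obtain ⟨h, h', htrim, Ph, Qh, hPhp, hQhp, hPh, hQh, hW⟩ := hL
  haveI := hPhp; haveI := hQhp
  set U : Measure ℝ := volume.restrict (Ioo (0:ℝ) 1) with hUdef
  -- second moments of the trimmed measures
  have hmom : ∀ (R R₀ : Measure ℝ), IsProbabilityMeasure R → IsProbabilityMeasure R₀ →
      FiniteSecondMoment R₀ → (∀ x, distFun R x = h (distFun R₀ x)) →
      Integrable (fun t => (quant R t) ^ 2) U := by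
    intro R R₀ hR hR₀ hm hRc
    haveI := hR; haveI := hR₀
    have hdom := trim_measure_le hα0 hα1 htrim hRc
    have hlin : ∫⁻ t, ENNReal.ofReal ((quant R t) ^ 2) ∂U = ∫⁻ x, ENNReal.ofReal (x ^ 2) ∂ R := by
      have hpm : Measurable fun x : ℝ => x ^ 2 := measurable_id.pow_const 2
      conv_rhs => rw [← map_quant R]
      rw [lintegral_map hpm.ennreal_ofReal (measurable_quant R)]
    have hfin : ∫⁻ t, ENNReal.ofReal ((quant R t) ^ 2) ∂U < ⊤ := by
      rw [hlin]
      calc ∫⁻ x, ENNReal.ofReal (x ^ 2) ∂ R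
          ≤ ∫⁻ x, ENNReal.ofReal (x ^ 2) ∂(ENNReal.ofReal (1/(1-α)) • R₀) :=
            lintegral_mono' hdom le_rfl
        _ = ENNReal.ofReal (1/(1-α)) * ∫⁻ x, ENNReal.ofReal (x ^ 2) ∂ R₀ :=
            lintegral_smul_measure _ _
        _ < ⊤ := ENNReal.mul_lt_top ENNReal.ofReal_lt_top hm
    refine ⟨((measurable_quant R).pow_const 2).aestronglyMeasurable, ?_⟩
    rw [hasFiniteIntegral_iff_ofReal (Filter.Eventually.of_forall fun t => sq_nonneg _)]
    exact hfin
  have Int1 := hmom Ph P hPhp inferInstance hmP hPh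
  have Int2 := hmom Qh Q hQhp inferInstance hmQ hQh
  have hIntDiff : Integrable (fun t => (quant Ph t - quant Qh t) ^ 2) U := by
    refine Integrable.mono' ((Int1.const_mul 2).add (Int2.const_mul 2)) ?_ ?_
    · exact (((measurable_quant Ph).sub (measurable_quant Qh)).pow_const 2).aestronglyMeasurable
    · refine Filter.Eventually.of_forall fun t => ?_
      show ‖(quant Ph t - quant Qh t) ^ 2‖ ≤
        2 * (quant Ph t) ^ 2 + 2 * (quant Qh t) ^ 2
      rw [Real.norm_eq_abs, abs_of_nonneg (sq_nonneg _)]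
      nlinarith [sq_nonneg (quant Ph t + quant Qh t)]
  -- from W2 = 0 conclude Ph = Qh
  have hint0 : ∫ t in Ioo (0:ℝ) 1, (quant Ph t - quant Qh t) ^ 2 = 0 := by
    have hle := Real.sqrt_eq_zero'.1 hW
    have hge : 0 ≤ ∫ t in Ioo (0:ℝ) 1, (quant Ph t - quant Qh t) ^ 2 :=
      integral_nonneg fun t => sq_nonneg _
    linarith
  have hae : quant Ph =ᵐ[U] quant Qh := by
    have h0 := (integral_eq_zero_iff_of_nonneg_ae
      (Filter.Eventually.of_forall fun t => sq_nonneg _) hIntDiff).1 hint0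
    filter_upwards [h0] with t ht
    have h1 : (quant Ph t - quant Qh t) ^ 2 = 0 := ht
    have h2 := pow_eq_zero_iff (two_ne_zero) |>.1 h1
    linarith
  have hPQ : Ph = Qh := by rw [← map_quant Ph, ← map_quant Qh]; exact Measure.map_congr hae
  have hFG : ∀ x : ℝ, h (distFun P x) = h (distFun Q x) := by
    intro x; rw [← hPh, ← hQh, hPQ]
  -- the set where the quantiles differ lies in the "flat" set of h
  set N : Set ℝ := ⋃ q : ℚ,
    Ioc (min (distFun P q) (distFun Q q)) (max (distFun P q) (distFun Q q)) with hNdef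
  have hNmeas : MeasurableSet N := MeasurableSet.iUnion fun _ => measurableSet_Ioc
  have hDN : {t | t ∈ Ioo (0:ℝ) 1 ∧ quant P t ≠ quant Q t} ⊆ N := by
    rintro t ⟨ht, hne⟩
    rcases hne.lt_or_gt with hlt | hlt
    · obtain ⟨q, hq1, hq2⟩ := exists_rat_btwn hlt
      have hF : t ≤ distFun P q := (quant_le_iff P ht.1 ht.2).1 hq1.le
      have hG : distFun Q q < t := by
        by_contra hcon
        push_neg at hcon
        exact absurd ((quant_le_iff Q ht.1 ht.2).2 hcon) (not_le.2 hq2)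
      exact mem_iUnion.2 ⟨q, lt_of_le_of_lt (min_le_right _ _) hG,
        le_trans hF (le_max_left _ _)⟩
    · obtain ⟨q, hq1, hq2⟩ := exists_rat_btwn hlt
      have hF : t ≤ distFun Q q := (quant_le_iff Q ht.1 ht.2).1 hq1.le
      have hG : distFun P q < t := by
        by_contra hcon
        push_neg at hcon
        exact absurd ((quant_le_iff P ht.1 ht.2).2 hcon) (not_le.2 hq2)
      exact mem_iUnion.2 ⟨q, lt_of_le_of_lt (min_le_left _ _) hG,
        le_trans hF (le_max_right _ _)⟩
  have hmeasne : MeasurableSet {y : ℝ | ¬ h' y = 0} :=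
    (htrim.1 (measurableSet_singleton 0)).compl
  have hqnull : ∀ q : ℚ, volume ({y | ¬ h' y = 0} ∩
      Ioc (min (distFun P q) (distFun Q q)) (max (distFun P q) (distFun Q q))) = 0 := by
    intro q
    set m := min (distFun P q) (distFun Q q) with hmdef
    set M := max (distFun P q) (distFun Q q) with hMdef
    have hm0 : 0 ≤ m := le_min (distFun_nonneg P q) (distFun_nonneg Q q)
    have hM1 : M ≤ 1 := max_le (distFun_le_one P q) (distFun_le_one Q q)
    have hmM : m ≤ M := min_le_max
    have hzero : ∫ y in Ioc m M, h' y = 0 := by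
      rw [← trim_diff hα1 htrim hm0 hmM hM1]
      rcases le_total (distFun P q) (distFun Q q) with hc | hc
      · rw [hmdef, hMdef, min_eq_left hc, max_eq_right hc, hFG]; ring
      · rw [hmdef, hMdef, min_eq_right hc, max_eq_left hc, hFG]; ring
    have hb' : ∀ᵐ y ∂(volume.restrict (Ioc m M)), 0 ≤ h' y := by
      have := ae_restrict_of_ae_restrict_of_subset
        (Ioc_subset_Icc_self.trans (Icc_subset_Icc hm0 hM1)) htrim.2.1
      filter_upwards [this] with y hy using hy.1
    have hint : IntegrableOn h' (Ioc m M) volume :=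
      (trim_integrableOn hα1 htrim).mono_set (Ioc_subset_Ioc hm0 hM1)
    have haez := (integral_eq_zero_iff_of_nonneg_ae hb' hint).1 hzero
    have haez' : ∀ᵐ y ∂(volume.restrict (Ioc m M)), h' y = 0 := by
      filter_upwards [haez] with y hy using hy
    have hfin := ae_iff.1 haez'
    rwa [Measure.restrict_apply hmeasne] at hfin
  have hNnull : volume ({y | ¬ h' y = 0} ∩ N) = 0 := by
    rw [hNdef, inter_iUnion]
    exact measure_iUnion_null fun q => hqnull q
  set E : Set ℝ := Ioc (0:ℝ) 1 ∩ N with hEdef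
  have hEmeas : MeasurableSet E := measurableSet_Ioc.inter hNmeas
  have hEzero : ∫ y in E, h' y = 0 := by
    refine integral_eq_zero_of_ae ?_
    have hE0 : volume.restrict E {y | ¬ h' y = 0} = 0 := by
      rw [Measure.restrict_apply hmeasne]
      exact measure_mono_null (inter_subset_inter_right _ inter_subset_right) hNnull
    exact (ae_iff).2 hE0
  have hIoc1 : ∫ y in Ioc (0:ℝ) 1, h' y = 1 := by
    have hd := trim_diff hα1 htrim (le_refl (0:ℝ)) zero_le_one le_rfl
    rw [trim_zero hα1 htrim, htrim.2.2.2] at hd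
    linarith
  have hsplit := integral_inter_add_diff (s := Ioc (0:ℝ) 1) (f := h') (μ := volume)
    hNmeas (trim_integrableOn hα1 htrim)
  have hdiffint : ∫ y in Ioc (0:ℝ) 1 \ N, h' y = 1 := by
    rw [← hEdef, hEzero, hIoc1, zero_add] at hsplit
    exact hsplit
  -- measure arithmetic
  have hfinE : volume E ≠ ⊤ :=
    (lt_of_le_of_lt (measure_mono inter_subset_left)
      (by rw [Real.volume_Ioc]; exact ENNReal.ofReal_lt_top)).ne
  have hfinD : volume (Ioc (0:ℝ) 1 \ N) ≠ ⊤ :=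
    (lt_of_le_of_lt (measure_mono diff_subset)
      (by rw [Real.volume_Ioc]; exact ENNReal.ofReal_lt_top)).ne
  have hsum : (volume E).toReal + (volume (Ioc (0:ℝ) 1 \ N)).toReal = 1 := by
    have hm := measure_inter_add_diff (μ := volume) (Ioc (0:ℝ) 1) hNmeas
    rw [← hEdef] at hm
    have : (volume E + volume (Ioc (0:ℝ) 1 \ N)).toReal = (volume (Ioc (0:ℝ) 1)).toReal := by
      rw [hm]
    rwa [ENNReal.toReal_add hfinE hfinD, Real.volume_Ioc, sub_zero,
      ENNReal.toReal_ofReal zero_le_one] at this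
  have h1α : (0:ℝ) < 1 - α := by linarith
  have hle1 : (1:ℝ) ≤ (1/(1-α)) * (volume (Ioc (0:ℝ) 1 \ N)).toReal := by
    calc (1:ℝ) = ∫ y in Ioc (0:ℝ) 1 \ N, h' y := hdiffint.symm
    _ ≤ _ := trim_setIntegral_le hα1 htrim diff_subset (measurableSet_Ioc.diff hNmeas)
  have hEα : (volume E).toReal ≤ α := by
    have hb : 1 - α ≤ (volume (Ioc (0:ℝ) 1 \ N)).toReal := by
      have h2 : (1:ℝ) ≤ (volume (Ioc (0:ℝ) 1 \ N)).toReal / (1-α) := by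
        rwa [one_div_mul_eq_div] at hle1
      have := (le_div_iff₀ h1α).1 h2
      linarith
    linarith
  calc volume {t | t ∈ Ioo (0:ℝ) 1 ∧ quant P t ≠ quant Q t}
      ≤ volume E := measure_mono (fun t ht => ⟨Ioo_subset_Ioc_self ht.1, hDN ht⟩)
    _ = ENNReal.ofReal (volume E).toReal := (ENNReal.ofReal_toReal hfinE).symm
    _ ≤ ENNReal.ofReal α := ENNReal.ofReal_le_ofReal hEα


/-- The common trimming distance `T_α(P,Q)` vanishes iff `P` and `Q`
are non-decreasing, left-continuous transforms of a common random signal, the transforms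
differing with probability at most `α`. -/
theorem common_trimming_zero_iff_monotone_transforms
    (α : ℝ) (hα0 : 0 ≤ α) (hα1 : α < 1)
    (P Q : Measure ℝ) (hP : IsProbabilityMeasure P) (hQ : IsProbabilityMeasure Q)
    (hmP : FiniteSecondMoment P) (hmQ : FiniteSecondMoment Q) :
    (∃ h h' : ℝ → ℝ, IsTrimmingFun α h h' ∧
      ∃ Ph Qh : Measure ℝ, IsProbabilityMeasure Ph ∧ IsProbabilityMeasure Qh ∧
        (∀ x, distFun Ph x = h (distFun P x)) ∧
        (∀ x, distFun Qh x = h (distFun Q x)) ∧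
        W2 Ph Qh = 0) ↔
    (∃ (Ω : Type) (_ : MeasurableSpace Ω) (Pr : Measure Ω), IsProbabilityMeasure Pr ∧
      ∃ (Z : Ω → ℝ) (φ₁ φ₂ : ℝ → ℝ), Measurable Z ∧
        Monotone φ₁ ∧ Monotone φ₂ ∧
        (∀ x, ContinuousWithinAt φ₁ (Set.Iio x) x) ∧
        (∀ x, ContinuousWithinAt φ₂ (Set.Iio x) x) ∧
        Measure.map (fun ω => φ₁ (Z ω)) Pr = P ∧
        Measure.map (fun ω => φ₂ (Z ω)) Pr = Q ∧
        Pr {ω | φ₁ (Z ω) ≠ φ₂ (Z ω)} ≤ ENNReal.ofReal α) := by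
  haveI := hP; haveI := hQ
  constructor
  · intro hL
    exact partB α P Q hα0 (partA P Q hα0 hα1 hmP hmQ hL)
  · intro hR
    exact partD α P Q hα0 hα1 (partC α P Q hα0 hR)

end
end
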